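/- arXiv:1403.5003 — 2 statements merged into one kernel-verified Lean document; each statement's English description precedes it below -/
import Mathlib

section
/- Let k be a positive integer that is a multiple of four but not a power of two, and let Ω_k be the orthogonality graph. Then α*(Ω_k^{+k}) > k · α*(Ω_k); that is, k cooperating senders sharing entanglement can transmit strictly more messages jointly than k times what a single sender can transmit with entanglement. -/
open scoped BigOperators ComplexOrder
open Matrix

noncomputable section

namespace ZeroError

variable {V W : Type*}

/-- The independence number of a simple graph: the maximum cardinality of a set of
pairwise non-adjacent vertices. -/
def indepNum [Fintype V] (G : SimpleGraph V) : ℕ :=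
  sSup {n | ∃ s : Finset V, s.card = n ∧ ∀ u ∈ s, ∀ v ∈ s, u ≠ v → ¬ G.Adj u v}

/-- The strong product of two simple graphs. -/
def strongProd (G : SimpleGraph V) (H : SimpleGraph W) : SimpleGraph (V × W) where
  Adj x y := x ≠ y ∧ (x.1 = y.1 ∨ G.Adj x.1 y.1) ∧ (x.2 = y.2 ∨ H.Adj x.2 y.2)
  symm := by
    constructor
    rintro x y ⟨hne, h1, h2⟩
    exact ⟨hne.symm, h1.imp Eq.symm (fun a => a.symm), h2.imp Eq.symm (fun a => a.symm)⟩
  loopless := by constructor; rintro x ⟨hne, -⟩; exact hne rfl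

/-- The n-fold strong power of a simple graph. -/
def strongPow (G : SimpleGraph V) (n : ℕ) : SimpleGraph (Fin n → V) where
  Adj u v := u ≠ v ∧ ∀ i, u i = v i ∨ G.Adj (u i) (v i)
  symm := by
    constructor
    rintro u v ⟨hne, h⟩
    exact ⟨hne.symm, fun i => (h i).imp Eq.symm (fun a => a.symm)⟩
  loopless := by constructor; rintro u ⟨hne, -⟩; exact hne rfl

/-- `copies G ℓ` is the disjoint union `G^{+ℓ}` of ℓ copies of `G`. -/
def copies (G : SimpleGraph V) (ℓ : ℕ) : SimpleGraph (V × Fin ℓ) where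
  Adj x y := x.2 = y.2 ∧ G.Adj x.1 y.1
  symm := by constructor; rintro x y ⟨h1, h2⟩; exact ⟨h1.symm, h2.symm⟩
  loopless := by constructor; rintro x ⟨-, h⟩; exact G.loopless.irrefl _ h

/-- The Cartesian product `G □ K_t` of a graph with the complete graph on `t` vertices. -/
def cartProdK (G : SimpleGraph V) (t : ℕ) : SimpleGraph (V × Fin t) where
  Adj x y := (G.Adj x.1 y.1 ∧ x.2 = y.2) ∨ (x.1 = y.1 ∧ x.2 ≠ y.2)
  symm := by
    constructor
    rintro x y (⟨h1, h2⟩ | ⟨h1, h2⟩)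
    · exact Or.inl ⟨h1.symm, h2.symm⟩
    · exact Or.inr ⟨h1.symm, h2.symm⟩
  loopless := by constructor; rintro x (⟨h, -⟩ | ⟨-, h⟩); exacts [G.loopless.irrefl _ h, h rfl]

/-- The chromatic number: the least number of colors of a proper coloring. -/
def chromNum [Fintype V] (G : SimpleGraph V) : ℕ :=
  sInf {m | ∃ c : V → Fin m, ∀ u v, G.Adj u v → c u ≠ c v}

/-- The entanglement-assisted independence number `α*(G)`. -/
def qIndepNum [Fintype V] (G : SimpleGraph V) : ℕ :=
  sSup {m | ∃ (d : ℕ) (ρ : Matrix (Fin d) (Fin d) ℂ)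
      (σ : Fin m → V → Matrix (Fin d) (Fin d) ℂ),
    ρ.PosSemidef ∧ ρ.trace = 1 ∧ (∀ i u, (σ i u).PosSemidef) ∧
    (∀ i, ∑ u, σ i u = ρ) ∧
    ∀ i j u v, i ≠ j → (u = v ∨ G.Adj u v) → σ i u * σ j v = 0}

/-- The entanglement-assisted chromatic number `χ*(G)`. -/
def qChromNum [Fintype V] (G : SimpleGraph V) : ℕ :=
  sInf {m | ∃ (d : ℕ) (ρ : Matrix (Fin d) (Fin d) ℂ)
      (σ : V → Fin m → Matrix (Fin d) (Fin d) ℂ),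
    ρ.PosSemidef ∧ ρ.trace = 1 ∧ (∀ x i, (σ x i).PosSemidef) ∧
    (∀ x, ∑ i, σ x i = ρ) ∧
    ∀ x y i, G.Adj x y → σ x i * σ y i = 0}

/-- The partial trace onto the k-th tensor factor:
`(Tr_{B_{-k}} M)_{a,b} = Σ M_{s,t}` over tuples `s, t` with `s k = a`, `t k = b` and
`s r = t r` for all `r ≠ k`. -/
def ptraceK {d ℓ : ℕ} (k : Fin ℓ)
    (M : Matrix (Fin ℓ → Fin d) (Fin ℓ → Fin d) ℂ) : Matrix (Fin d) (Fin d) ℂ :=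
  Matrix.of fun a b => ∑ s : Fin ℓ → Fin d, ∑ t : Fin ℓ → Fin d,
    if s k = a ∧ t k = b ∧ ∀ r, r ≠ k → s r = t r then M s t else 0

/-- The entanglement-assisted compound independence number `α*_{1,ℓ}(G)` with ℓ receivers. -/
def qCompoundNum [Fintype V] (G : SimpleGraph V) (ℓ : ℕ) : ℕ :=
  sSup {m | ∃ (d : ℕ) (ρ : Matrix (Fin ℓ → Fin d) (Fin ℓ → Fin d) ℂ)
      (σ : Fin m → V → Matrix (Fin ℓ → Fin d) (Fin ℓ → Fin d) ℂ),
    ρ.PosSemidef ∧ ρ.trace = 1 ∧ (∀ i u, (σ i u).PosSemidef) ∧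
    (∀ i, ∑ u, σ i u = ρ) ∧
    ∀ (k : Fin ℓ) i j u v, i ≠ j → (u = v ∨ G.Adj u v) →
      ptraceK k (σ i u) * ptraceK k (σ j v) = 0}

/-- The Shannon capacity `c(G) = sup_{n ≥ 1} (1/n) log₂ α(G^{⊠n})`. -/
def shannonCap [Fintype V] (G : SimpleGraph V) : ℝ :=
  ⨆ n : ℕ+, Real.logb 2 (indepNum (strongPow G (n : ℕ))) / ((n : ℕ) : ℝ)

/-- The entangled Shannon capacity `c*(G) = sup_{n ≥ 1} (1/n) log₂ α*(G^{⊠n})`. -/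
def qShannonCap [Fintype V] (G : SimpleGraph V) : ℝ :=
  ⨆ n : ℕ+, Real.logb 2 (qIndepNum (strongPow G (n : ℕ))) / ((n : ℕ) : ℝ)

/-- The entanglement-assisted compound Shannon capacity
`c*_{1,ℓ}(G) = sup_{n ≥ 1} (1/n) log₂ α*_{1,ℓ}(G^{⊠n})`. -/
def qCompoundCap [Fintype V] (G : SimpleGraph V) (ℓ : ℕ) : ℝ :=
  ⨆ n : ℕ+, Real.logb 2 (qCompoundNum (strongPow G (n : ℕ)) ℓ) / ((n : ℕ) : ℝ)

/-- The edge-clique cover number `θ_e(G)`: the least number of cliques covering all edges. -/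
def edgeCliqueCoverNum [Fintype V] (G : SimpleGraph V) : ℕ :=
  sInf {n | ∃ F : Finset (Finset V), F.card = n ∧ (∀ c ∈ F, G.IsClique (c : Set V)) ∧
    ∀ u v, G.Adj u v → ∃ c ∈ F, u ∈ c ∧ v ∈ c}

/-- `θ'_e(G)`: the edge-clique cover number plus the number of isolated vertices. -/
def thetaPrime [Fintype V] (G : SimpleGraph V) : ℕ :=
  edgeCliqueCoverNum G + {v : V | ∀ u, ¬ G.Adj v u}.ncard

/-- `f` is an orthogonal representation of `G` in dimension `d`. -/
def IsOrthRep (G : SimpleGraph V) (d : ℕ) (f : V → EuclideanSpace ℂ (Fin d)) : Prop :=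
  (∀ v, ‖f v‖ = 1) ∧ ∀ u v, G.Adj u v → inner ℂ (f u) (f v) = (0 : ℂ)

/-- The orthogonal rank `ξ(G)`. -/
def orthRank (G : SimpleGraph V) : ℕ :=
  sInf {d | ∃ f : V → EuclideanSpace ℂ (Fin d), IsOrthRep G d f}

/-- Vertices of the quarter orthogonality graph `Γ_k`: ±1-vectors of length `k+1`
with first coordinate 1 and an even number of -1 entries. -/
def QOVertex (k : ℕ) : Type :=
  {u : Fin (k + 1) → ℤ // (∀ i, u i = 1 ∨ u i = -1) ∧ u 0 = 1 ∧
    Even ((Finset.univ.filter fun i => u i = -1).card)}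

instance (k : ℕ) : Fintype (QOVertex k) :=
  Fintype.ofInjective (fun u : QOVertex k => fun i => decide (u.val i = 1))
    (by
      intro u v h
      apply Subtype.ext; funext i
      have hi := congrFun h i
      rcases u.prop.1 i with h1 | h1 <;> rcases v.prop.1 i with h2 | h2 <;>
        simp [h1, h2] at hi ⊢)

/-- The quarter orthogonality graph `Γ_k`. -/
def quarterOrthGraph (k : ℕ) : SimpleGraph (QOVertex k) where
  Adj u v := u ≠ v ∧ ∑ i, u.val i * v.val i = 0
  symm := by
    constructor
    rintro u v ⟨hne, h⟩
    refine ⟨hne.symm, ?_⟩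
    rw [← h]
    exact Finset.sum_congr rfl fun i _ => mul_comm _ _
  loopless := by constructor; rintro u ⟨hne, -⟩; exact hne rfl

/-- Vertices of the orthogonality graph `Ω_k`: all ±1-vectors of length `k`. -/
def PMVertex (k : ℕ) : Type :=
  {u : Fin k → ℤ // ∀ i, u i = 1 ∨ u i = -1}

instance (k : ℕ) : Fintype (PMVertex k) :=
  Fintype.ofInjective (fun u : PMVertex k => fun i => decide (u.val i = 1))
    (by
      intro u v h
      apply Subtype.ext; funext i
      have hi := congrFun h i
      rcases u.prop i with h1 | h1 <;> rcases v.prop i with h2 | h2 <;>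
        simp [h1, h2] at hi ⊢)

/-- The orthogonality graph `Ω_k`. -/
def orthGraph (k : ℕ) : SimpleGraph (PMVertex k) where
  Adj u v := u ≠ v ∧ ∑ i, u.val i * v.val i = 0
  symm := by
    constructor
    rintro u v ⟨hne, h⟩
    refine ⟨hne.symm, ?_⟩
    rw [← h]
    exact Finset.sum_congr rfl fun i _ => mul_comm _ _
  loopless := by constructor; rintro u ⟨hne, -⟩; exact hne rfl



/-! ## Auxiliary development -/

open Polynomial

lemma trace_conjTranspose_mul_self_nonneg {m n : Type*} [Fintype m] [Fintype n]
    (A : Matrix m n ℂ) : 0 ≤ (Aᴴ * A).trace := by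
  have h : (Aᴴ * A).trace = ((∑ j, ∑ i, Complex.normSq (A i j) : ℝ) : ℂ) := by
    simp only [Matrix.trace, Matrix.diag, Matrix.mul_apply, Matrix.conjTranspose_apply]
    push_cast
    refine Finset.sum_congr rfl fun j _ => Finset.sum_congr rfl fun i _ => ?_
    rw [Complex.normSq_eq_conj_mul_self]
    rfl
  rw [h]
  refine Complex.zero_le_real.mpr ?_
  refine Finset.sum_nonneg fun j _ => Finset.sum_nonneg fun i _ => Complex.normSq_nonneg _

lemma trace_mul_psd_nonneg {d : ℕ} {P Q : Matrix (Fin d) (Fin d) ℂ}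
    (hP : P.PosSemidef) (hQ : Q.PosSemidef) : 0 ≤ (P * Q).trace := by
  obtain ⟨B, rfl⟩ : ∃ B : Matrix (Fin d) (Fin d) ℂ, P = Bᴴ * B := by
    open scoped MatrixOrder in
    obtain ⟨B, hB⟩ := CStarAlgebra.nonneg_iff_eq_star_mul_self.mp hP.nonneg
    exact ⟨B, hB⟩
  obtain ⟨C, rfl⟩ : ∃ C : Matrix (Fin d) (Fin d) ℂ, Q = Cᴴ * C := by
    open scoped MatrixOrder in
    obtain ⟨C, hC⟩ := CStarAlgebra.nonneg_iff_eq_star_mul_self.mp hQ.nonneg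
    exact ⟨C, hC⟩
  have h : (Bᴴ * B * (Cᴴ * C)).trace = ((B * Cᴴ)ᴴ * (B * Cᴴ)).trace := by
    rw [Matrix.conjTranspose_mul, Matrix.conjTranspose_conjTranspose]
    calc (Bᴴ * B * (Cᴴ * C)).trace
        = ((Bᴴ * B * Cᴴ) * C).trace := by rw [Matrix.mul_assoc (Bᴴ * B)]
      _ = (C * (Bᴴ * B * Cᴴ)).trace := (Matrix.trace_mul_comm _ _)
      _ = ((C * Bᴴ) * (B * Cᴴ)).trace := by simp only [Matrix.mul_assoc]
  rw [h]
  exact trace_conjTranspose_mul_self_nonneg _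

/-- Gram-type inequality: a PSD matrix applied to a tuple of matrices. -/
lemma psd_sum_trace_nonneg {n : Type*} [Fintype n] {d : ℕ} {M : Matrix n n ℂ}
    (hM : M.PosSemidef) (Z : n → Matrix (Fin d) (Fin d) ℂ) :
    0 ≤ ∑ u, ∑ v, M u v * ((Z u)ᴴ * (Z v)).trace := by
  have step1 : ∀ u v : n, M u v * ((Z u)ᴴ * (Z v)).trace
      = ∑ p : Fin d × Fin d, star (Z u p.1 p.2) * M u v * Z v p.1 p.2 := by
    intro u v
    have ht : ((Z u)ᴴ * (Z v)).trace = ∑ p : Fin d × Fin d, star (Z u p.1 p.2) * Z v p.1 p.2 := by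
      simp only [Matrix.trace, Matrix.diag, Matrix.mul_apply, Matrix.conjTranspose_apply,
        Fintype.sum_prod_type]
      rw [Finset.sum_comm]
    rw [ht, Finset.mul_sum]
    refine Finset.sum_congr rfl fun p _ => by ring
  have key : ∑ u, ∑ v, M u v * ((Z u)ᴴ * (Z v)).trace
      = ∑ p : Fin d × Fin d,
          (star (fun u => Z u p.1 p.2) ⬝ᵥ M.mulVec (fun u => Z u p.1 p.2)) := by
    simp only [step1]
    rw [show ∑ u, ∑ v, ∑ p : Fin d × Fin d, star (Z u p.1 p.2) * M u v * Z v p.1 p.2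
        = ∑ p : Fin d × Fin d, ∑ u, ∑ v, star (Z u p.1 p.2) * M u v * Z v p.1 p.2 from
      Eq.trans (Finset.sum_congr rfl fun u _ => Finset.sum_comm) Finset.sum_comm]
    refine Finset.sum_congr rfl fun p _ => ?_
    simp only [dotProduct, Matrix.mulVec, Pi.star_apply, Finset.mul_sum]
    exact Finset.sum_congr rfl fun u _ => Finset.sum_congr rfl fun v _ => by ring
  rw [key]
  exact Finset.sum_nonneg fun p _ => hM.dotProduct_mulVec_nonneg _

lemma nonneg_re {z : ℂ} (h : 0 ≤ z) : 0 ≤ z.re := (Complex.le_def.mp h).1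

lemma le_re {z w : ℂ} (h : z ≤ w) : z.re ≤ w.re := (Complex.le_def.mp h).1

/-- The quantum ratio bound: any feasible solution for the entanglement-assisted
independence SDP is bounded by the value of a Lovász-theta-type dual certificate. -/
lemma qbound {V : Type*} [Fintype V] (G : SimpleGraph V)
    (lam c : ℝ) (hc : 0 ≤ c) (hcl : c ≤ lam)
    (B : Matrix V V ℂ) (hB : B.PosSemidef)
    (hBdiag : ∀ u, B u u = (lam : ℂ) - 1)
    (hBnon : ∀ u v, u ≠ v → ¬ G.Adj u v → B u v = -1)
    (hBadj : ∀ u v, G.Adj u v → B u v = (c : ℂ) - 1)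
    {m d : ℕ} (ρ : Matrix (Fin d) (Fin d) ℂ) (σ : Fin m → V → Matrix (Fin d) (Fin d) ℂ)
    (hρ : ρ.PosSemidef) (htr : ρ.trace = 1) (hσ : ∀ i u, (σ i u).PosSemidef)
    (hsum : ∀ i, ∑ u, σ i u = ρ)
    (horth : ∀ i j u v, i ≠ j → (u = v ∨ G.Adj u v) → σ i u * σ j v = 0) :
    (m : ℝ) ≤ lam := by
  classical
  rcases Nat.eq_zero_or_pos m with hm | hm
  · subst hm; exact_mod_cast hc.trans hcl
  set Z : V → Matrix (Fin d) (Fin d) ℂ := fun u => ∑ i, σ i u with hZ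
  have hZherm : ∀ u, (Z u)ᴴ = Z u := by
    intro u
    simp only [hZ, Matrix.conjTranspose_sum]
    exact Finset.sum_congr rfl fun i _ => (hσ i u).1
  have tnonneg : ∀ (i j : Fin m) (u v : V), 0 ≤ ((σ i u) * (σ j v)).trace :=
    fun i j u v => trace_mul_psd_nonneg (hσ i u) (hσ j v)
  have hZZ : ∀ u v, ((Z u) * (Z v)).trace = ∑ i, ∑ j, ((σ i u) * (σ j v)).trace := by
    intro u v
    simp only [hZ, Matrix.sum_mul, Matrix.mul_sum, Matrix.trace_sum]
    exact Finset.sum_comm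
  have main : 0 ≤ ∑ u, ∑ v, B u v * ((Z u) * (Z v)).trace := by
    have := psd_sum_trace_nonneg hB Z
    simpa only [hZherm] using this
  have hBsplit : ∀ u v, B u v * ((Z u) * (Z v)).trace
      = (if u = v then (lam : ℂ) * ((Z u) * (Z v)).trace else 0)
        - ((Z u) * (Z v)).trace
        + (if G.Adj u v then (c : ℂ) * ((Z u) * (Z v)).trace else 0) := by
    intro u v
    by_cases h1 : u = v
    · subst h1
      rw [if_pos rfl, if_neg (G.loopless.irrefl u), hBdiag]; ring
    · by_cases h2 : G.Adj u v
      · rw [if_neg h1, if_pos h2, hBadj _ _ h2]; ring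
      · rw [if_neg h1, if_neg h2, hBnon _ _ h1 h2]; ring
  set Fc : ℂ := (ρ * ρ).trace with hFc
  have hFc_nonneg : 0 ≤ Fc := trace_mul_psd_nonneg hρ hρ
  have hsumZ : ∑ u, Z u = (m : ℂ) • ρ := by
    rw [hZ]
    show ∑ u, ∑ i, σ i u = (m : ℂ) • ρ
    rw [Finset.sum_comm]
    simp only [hsum]
    rw [Finset.sum_const, Finset.card_univ, Fintype.card_fin]
    rw [← Nat.cast_smul_eq_nsmul ℂ]
  have hSall : ∑ u, ∑ v, ((Z u) * (Z v)).trace = ((m:ℝ) : ℂ)^2 * Fc := by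
    have e1 : (∑ u, Z u) * (∑ v, Z v) = ∑ u, ∑ v, (Z u) * (Z v) := by
      rw [Matrix.sum_mul]; exact Finset.sum_congr rfl fun u _ => by rw [Matrix.mul_sum]
    have h2 : ∑ u, ∑ v, ((Z u) * (Z v)).trace = ((∑ u, Z u) * (∑ v, Z v)).trace := by
      rw [e1, Matrix.trace_sum]
      exact Finset.sum_congr rfl fun u _ => by rw [Matrix.trace_sum]
    rw [h2, hsumZ, Matrix.smul_mul, Matrix.mul_smul, Matrix.trace_smul, Matrix.trace_smul]
    rw [smul_smul, smul_eq_mul]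
    push_cast
    ring
  -- diagonal collapse
  have hdiag : ∀ u, ((Z u) * (Z u)).trace = ∑ i, ((σ i u) * (σ i u)).trace := by
    intro u
    rw [hZZ]
    refine Finset.sum_congr rfl fun i _ => ?_
    refine Finset.sum_eq_single i (fun j _ hji => ?_) (fun h => absurd (Finset.mem_univ i) h)
    rw [horth i j u u (fun h => hji h.symm) (Or.inl rfl), Matrix.trace_zero]
  have hadjcollapse : ∀ u v, G.Adj u v →
      ((Z u) * (Z v)).trace = ∑ i, ((σ i u) * (σ i v)).trace := by
    intro u v hadj
    rw [hZZ]
    refine Finset.sum_congr rfl fun i _ => ?_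
    refine Finset.sum_eq_single i (fun j _ hji => ?_) (fun h => absurd (Finset.mem_univ i) h)
    rw [horth i j u v (fun h => hji h.symm) (Or.inr hadj), Matrix.trace_zero]
  set SD : ℂ := ∑ u, ((Z u) * (Z u)).trace with hSDdef
  set SA : ℂ := ∑ u, ∑ v, (if G.Adj u v then ((Z u) * (Z v)).trace else 0) with hSAdef
  have main2 : 0 ≤ ((lam:ℝ) : ℂ) * SD - ((m:ℝ) : ℂ)^2 * Fc + ((c:ℝ) : ℂ) * SA := by
    have e : ∑ u, ∑ v, B u v * ((Z u) * (Z v)).trace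
        = ((lam:ℝ) : ℂ) * SD - ((m:ℝ) : ℂ)^2 * Fc + ((c:ℝ) : ℂ) * SA := by
      simp only [hBsplit, Finset.sum_add_distrib, Finset.sum_sub_distrib]
      rw [hSall]
      congr 1
      · congr 1
        simp only [Finset.sum_ite_eq, Finset.mem_univ, if_true]
        rw [hSDdef, Finset.mul_sum]
      · have hpt : ∀ u v : V, (if G.Adj u v then ((c:ℝ):ℂ) * ((Z u) * (Z v)).trace else 0)
            = ((c:ℝ):ℂ) * (if G.Adj u v then ((Z u) * (Z v)).trace else 0) := by
          intro u v; split <;> simp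
        simp only [hpt, ← Finset.mul_sum]; rfl
    rw [← e]; exact main
  -- per message quantities
  set Ni : Fin m → ℂ := fun i => ∑ u, ((σ i u) * (σ i u)).trace with hNidef
  set Ai : Fin m → ℂ := fun i =>
    ∑ u, ∑ v, (if G.Adj u v then ((σ i u) * (σ i v)).trace else 0) with hAidef
  have hSD_eq : SD = ∑ i, Ni i := by
    rw [hSDdef]
    simp only [hdiag]
    exact Finset.sum_comm
  have hSA_eq : SA = ∑ i, Ai i := by
    rw [hSAdef]
    have hpt : ∀ u v : V, (if G.Adj u v then ((Z u) * (Z v)).trace else 0)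
        = ∑ i, (if G.Adj u v then ((σ i u) * (σ i v)).trace else 0) := by
      intro u v
      by_cases h : G.Adj u v
      · simp only [if_pos h]; exact hadjcollapse u v h
      · simp [if_neg h]
    simp only [hpt]
    exact Eq.trans (Finset.sum_congr rfl fun u _ => Finset.sum_comm) Finset.sum_comm
  have hFi : ∀ i, ∑ u, ∑ v, ((σ i u) * (σ i v)).trace = Fc := by
    intro i
    have e1 : (∑ u, σ i u) * (∑ v, σ i v) = ∑ u, ∑ v, (σ i u) * (σ i v) := by
      rw [Matrix.sum_mul]; exact Finset.sum_congr rfl fun u _ => by rw [Matrix.mul_sum]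
    have h2 : ∑ u, ∑ v, ((σ i u) * (σ i v)).trace = ((∑ u, σ i u) * (∑ v, σ i v)).trace := by
      rw [e1, Matrix.trace_sum]
      exact Finset.sum_congr rfl fun u _ => by rw [Matrix.trace_sum]
    rw [h2, hsum i, hFc]
  have hAiNi : ∀ i, Ai i + Ni i ≤ Fc := by
    intro i
    have hNi2 : Ni i = ∑ u, ∑ v, (if u = v then ((σ i u) * (σ i v)).trace else 0) := by
      rw [hNidef]
      exact Finset.sum_congr rfl fun u _ => by
        rw [Finset.sum_ite_eq, if_pos (Finset.mem_univ u)]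
    rw [← hFi i, hAidef, hNi2, ← Finset.sum_add_distrib]
    refine Finset.sum_le_sum fun u _ => ?_
    rw [← Finset.sum_add_distrib]
    refine Finset.sum_le_sum fun v _ => ?_
    by_cases h1 : G.Adj u v
    · rw [if_pos h1, if_neg (G.ne_of_adj h1), add_zero]
    · rw [if_neg h1]
      by_cases h2 : u = v
      · rw [if_pos h2, zero_add]
      · rw [if_neg h2, add_zero]; exact tnonneg i i u v
  have hAi_nonneg : ∀ i, 0 ≤ Ai i := by
    intro i
    refine Finset.sum_nonneg fun u _ => Finset.sum_nonneg fun v _ => ?_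
    by_cases h : G.Adj u v
    · rw [if_pos h]; exact tnonneg i i u v
    · rw [if_neg h]
  have hNi_nonneg : ∀ i, 0 ≤ Ni i := fun i =>
    Finset.sum_nonneg fun u _ => tnonneg i i u u
  -- real parts
  have R2 : SA.re + SD.re ≤ (m : ℝ) * Fc.re := by
    have hsumle : SA + SD ≤ (m : ℂ) • Fc := by
      rw [hSA_eq, hSD_eq, ← Finset.sum_add_distrib]
      calc ∑ i, (Ai i + Ni i) ≤ ∑ _i : Fin m, Fc := Finset.sum_le_sum fun i _ => hAiNi i
        _ = (m : ℂ) • Fc := by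
            rw [Finset.sum_const, Finset.card_univ, Fintype.card_fin,
              ← Nat.cast_smul_eq_nsmul ℂ]
    have := le_re hsumle
    rw [Complex.add_re] at this
    simpa [Complex.smul_re] using this
  have R3 : SD.re ≤ (m : ℝ) * Fc.re := by
    have hsumle : SD ≤ (m : ℂ) • Fc := by
      rw [hSD_eq]
      calc ∑ i, Ni i ≤ ∑ _i : Fin m, Fc := Finset.sum_le_sum fun i _ =>
            le_trans (le_add_of_nonneg_left (hAi_nonneg i)) (hAiNi i)
        _ = (m : ℂ) • Fc := by
            rw [Finset.sum_const, Finset.card_univ, Fintype.card_fin,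
              ← Nat.cast_smul_eq_nsmul ℂ]
    have := le_re hsumle
    simpa [Complex.smul_re] using this
  have R4a : 0 ≤ SA.re := nonneg_re (by
    rw [hSA_eq]; exact Finset.sum_nonneg fun i _ => hAi_nonneg i)
  have R4b : 0 ≤ SD.re := nonneg_re (by
    rw [hSD_eq]; exact Finset.sum_nonneg fun i _ => hNi_nonneg i)
  have R1 : 0 ≤ lam * SD.re - (m:ℝ)^2 * Fc.re + c * SA.re := by
    have h := nonneg_re main2
    have e2 : (((m:ℝ) : ℂ)^2 * Fc) = (((m:ℝ)^2 : ℝ) : ℂ) * Fc := by push_cast; ring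
    rw [e2, Complex.add_re, Complex.sub_re, Complex.re_ofReal_mul, Complex.re_ofReal_mul,
      Complex.re_ofReal_mul] at h
    exact h
  have f_pos : 0 < Fc.re := by
    have hρne : ρ ≠ 0 := by
      intro h
      rw [h] at htr
      simp at htr
    have hent : ∃ a b, ρ a b ≠ 0 := by
      by_contra hcon
      push_neg at hcon
      exact hρne (by ext a b; exact hcon a b)
    obtain ⟨a0, b0, hab⟩ := hent
    have hFcval : Fc = ((∑ a, ∑ b, Complex.normSq (ρ a b) : ℝ) : ℂ) := by
      rw [hFc]
      have hrc : ∀ a b, ρ b a = (starRingEnd ℂ) (ρ a b) := by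
        intro a b
        conv_lhs => rw [← hρ.1]
        simp [Matrix.conjTranspose_apply]
      simp only [Matrix.trace, Matrix.diag, Matrix.mul_apply]
      push_cast
      refine Finset.sum_congr rfl fun a _ => Finset.sum_congr rfl fun b _ => ?_
      rw [hrc a b, Complex.mul_conj]
    rw [hFcval, Complex.ofReal_re]
    refine Finset.sum_pos' (fun a _ => Finset.sum_nonneg fun b _ => Complex.normSq_nonneg _)
      ⟨a0, Finset.mem_univ a0, ?_⟩
    refine Finset.sum_pos' (fun b _ => Complex.normSq_nonneg _)
      ⟨b0, Finset.mem_univ b0, ?_⟩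
    exact (Complex.normSq_pos).mpr hab
  -- final arithmetic
  have hm1 : (1 : ℝ) ≤ (m : ℝ) := by exact_mod_cast hm
  have h5 : c * SA.re ≤ c * ((m:ℝ) * Fc.re - SD.re) := by
    refine mul_le_mul_of_nonneg_left ?_ hc
    linarith
  have h6 : (lam - c) * SD.re ≤ (lam - c) * ((m:ℝ) * Fc.re) :=
    mul_le_mul_of_nonneg_left R3 (by linarith)
  have h7 : 0 ≤ (lam - (m:ℝ)) * ((m:ℝ) * Fc.re) := by nlinarith [R1, h5, h6]
  have h8 : 0 < (m:ℝ) * Fc.re := mul_pos (by exact_mod_cast hm) f_pos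
  nlinarith [h7, h8]

/-! ### Trivial certificate: `α*(G) ≤ |V(G)|` -/

lemma cert_trivial_psd {V : Type*} [Fintype V] [DecidableEq V] :
    (Matrix.of fun u v : V =>
      (if u = v then ((Fintype.card V : ℝ) : ℂ) else 0) - 1).PosSemidef := by
  refine Matrix.PosSemidef.of_dotProduct_mulVec_nonneg ?_ ?_
  · ext u v
    simp only [Matrix.conjTranspose_apply, Matrix.of_apply]
    by_cases h : v = u
    · subst h; simp
    · rw [if_neg h, if_neg (fun h' => h h'.symm)]
      simp
  · intro x
    have hv : (Matrix.of fun u v : V =>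
        (if u = v then ((Fintype.card V : ℝ) : ℂ) else 0) - 1).mulVec x
        = fun u => ((Fintype.card V : ℝ) : ℂ) * x u - ∑ v, x v := by
      funext u
      simp only [Matrix.mulVec, dotProduct, Matrix.of_apply, sub_mul, one_mul, ite_mul, zero_mul]
      rw [Finset.sum_sub_distrib, Finset.sum_ite_eq, if_pos (Finset.mem_univ u)]
    rw [hv]
    have hval : star x ⬝ᵥ (fun u => ((Fintype.card V:ℝ):ℂ) * x u - ∑ v, x v)
        = ((Fintype.card V:ℝ):ℂ) * (∑ u, (starRingEnd ℂ) (x u) * x u)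
          - ((starRingEnd ℂ) (∑ u, x u)) * (∑ v, x v) := by
      simp only [dotProduct, Pi.star_apply, mul_sub, Finset.sum_sub_distrib, map_sum]
      congr 1
      · rw [Finset.mul_sum]
        refine Finset.sum_congr rfl fun u _ => ?_
        rw [RCLike.star_def]
        ring
      · rw [Finset.sum_mul]
        refine Finset.sum_congr rfl fun u _ => ?_
        rw [RCLike.star_def]
    rw [hval]
    have hcs : Complex.normSq (∑ u, x u) ≤ (Fintype.card V : ℝ) * ∑ u, Complex.normSq (x u) := by
      have h1 : ‖∑ u, x u‖ ≤ ∑ u, ‖x u‖ := norm_sum_le _ _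
      have h2 : (∑ u, ‖x u‖)^2
          ≤ (Fintype.card V : ℝ) * ∑ u, (‖x u‖)^2 := by
        have := sq_sum_le_card_mul_sum_sq (s := (Finset.univ : Finset V))
          (f := fun u => ‖x u‖)
        simpa [Finset.card_univ] using this
      calc Complex.normSq (∑ u, x u) = (‖∑ u, x u‖)^2 := (Complex.sq_norm _).symm
        _ ≤ (∑ u, ‖x u‖)^2 := by
            exact pow_le_pow_left₀ (norm_nonneg _) h1 2
        _ ≤ (Fintype.card V : ℝ) * ∑ u, (‖x u‖)^2 := h2
        _ = (Fintype.card V : ℝ) * ∑ u, Complex.normSq (x u) := by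
            congr 1
            exact Finset.sum_congr rfl fun u _ => Complex.sq_norm _
    have hrw : ((Fintype.card V:ℝ):ℂ) * (∑ u, (starRingEnd ℂ) (x u) * x u)
          - ((starRingEnd ℂ) (∑ u, x u)) * (∑ v, x v)
        = (((Fintype.card V : ℝ) * (∑ u, Complex.normSq (x u))
            - Complex.normSq (∑ u, x u) : ℝ) : ℂ) := by
      push_cast
      congr 1
      · congr 1
        refine Finset.sum_congr rfl fun u _ => ?_
        rw [Complex.normSq_eq_conj_mul_self]
      · rw [Complex.normSq_eq_conj_mul_self]
    rw [hrw]
    exact Complex.zero_le_real.mpr (by linarith)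

lemma qbound_card {V : Type*} [Fintype V] [DecidableEq V] (G : SimpleGraph V)
    {m d : ℕ} (ρ : Matrix (Fin d) (Fin d) ℂ) (σ : Fin m → V → Matrix (Fin d) (Fin d) ℂ)
    (hρ : ρ.PosSemidef) (htr : ρ.trace = 1) (hσ : ∀ i u, (σ i u).PosSemidef)
    (hsum : ∀ i, ∑ u, σ i u = ρ)
    (horth : ∀ i j u v, i ≠ j → (u = v ∨ G.Adj u v) → σ i u * σ j v = 0) :
    (m : ℝ) ≤ (Fintype.card V : ℝ) := by
  refine qbound G (Fintype.card V : ℝ) 0 le_rfl (by positivity)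
    (Matrix.of fun u v : V => (if u = v then ((Fintype.card V : ℝ) : ℂ) else 0) - 1)
    cert_trivial_psd ?_ ?_ ?_ ρ σ hρ htr hσ hsum horth
  · intro u; simp
  · intro u v h _; simp [h]
  · intro u v h; simp [G.ne_of_adj h]


lemma choose_prod_identity (n s : ℕ) (hs : s ≤ n) :
    (2*n).choose (2*s) * ∏ i ∈ Finset.range s, (2*i+1)
      = n.choose s * ∏ i ∈ Finset.range s, (2*n - (2*i+1)) := by
  induction s with
  | zero => simp
  | succ s ih =>
    have hs' : s ≤ n := Nat.le_of_succ_le hs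
    have ih' := ih hs'
    have a1 := Nat.choose_succ_right_eq (2*n) (2*s+1)
    have a2 := Nat.choose_succ_right_eq (2*n) (2*s)
    have b1 := Nat.choose_succ_right_eq n s
    have E1 : (2*n).choose (2*s+2) * ((2*s+2)*(2*s+1))
        = (2*n).choose (2*s) * ((2*n - (2*s)) * (2*n - (2*s+1))) := by
      have h1 : 2*s+2 = 2*s+1+1 := by omega
      calc (2*n).choose (2*s+2) * ((2*s+2)*(2*s+1))
          = ((2*n).choose (2*s+1+1) * (2*s+1+1))*(2*s+1) := by rw [← h1]; ring
        _ = ((2*n).choose (2*s+1) * (2*n-(2*s+1)))*(2*s+1) := by rw [a1]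
        _ = ((2*n).choose (2*s) * (2*n - 2*s)) * (2*n-(2*s+1)) := by rw [← a2]; ring
        _ = _ := by ring
    have h2s : 2*(s+1) = 2*s+2 := by omega
    rw [h2s]
    refine Nat.eq_of_mul_eq_mul_right (show 0 < 2*s+2 by omega) ?_
    rw [Finset.prod_range_succ, Finset.prod_range_succ]
    have hns : 2*(n - s) = 2*n - 2*s := by omega
    calc (2*n).choose (2*s+2) * ((∏ i ∈ Finset.range s, (2*i+1)) * (2*s+1)) * (2*s+2)
        = ((2*n).choose (2*s+2) * ((2*s+2)*(2*s+1))) * ∏ i ∈ Finset.range s, (2*i+1) := by ring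
      _ = ((2*n).choose (2*s) * ((2*n - 2*s) * (2*n - (2*s+1)))) * ∏ i ∈ Finset.range s, (2*i+1) := by
          rw [E1]
      _ = ((2*n).choose (2*s) * ∏ i ∈ Finset.range s, (2*i+1)) * ((2*n-2*s) * (2*n-(2*s+1))) := by
          ring
      _ = (n.choose s * ∏ i ∈ Finset.range s, (2*n - (2*i+1))) * ((2*n-2*s) * (2*n-(2*s+1))) := by
          rw [ih']
      _ = ((n.choose s * (n-s)) * (∏ i ∈ Finset.range s, (2*n - (2*i+1))) * (2*n-(2*s+1))) * 2 := by
          rw [← hns]; ring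
      _ = ((n.choose (s+1) * (s+1)) * (∏ i ∈ Finset.range s, (2*n - (2*i+1))) * (2*n-(2*s+1))) * 2 := by
          rw [b1]
      _ = n.choose (s+1) * ((∏ i ∈ Finset.range s, (2*n - (2*i+1))) * (2*n - (2*(s)+1))) * (2*s+2) := by
          ring
  
lemma choose_ineq_half (n s : ℕ) (h1 : 1 ≤ s) (h2 : 2*s ≤ n+1) (hsn : s ≤ n) :
    (2*n - 1) * n.choose s ≤ (2*n).choose (2*s) := by
  have key := choose_prod_identity n s hsn
  have hq : (2*n-1) * ∏ i ∈ Finset.range s, (2*i+1) ≤ ∏ i ∈ Finset.range s, (2*n - (2*i+1)) := by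
    obtain ⟨s', rfl⟩ : ∃ s', s = s'+1 := ⟨s-1, by omega⟩
    rw [Finset.prod_range_succ', Finset.prod_range_succ']
    have hterm : ∏ i ∈ Finset.range s', (2*(i+1)+1) ≤ ∏ i ∈ Finset.range s', (2*n - (2*(i+1)+1)) := by
      refine Finset.prod_le_prod' ?_
      intro i hi
      have hi' : i < s' := Finset.mem_range.mp hi
      omega
    calc (2*n-1) * ((∏ i ∈ Finset.range s', (2*(i+1)+1)) * (2*0+1))
        = (∏ i ∈ Finset.range s', (2*(i+1)+1)) * (2*n-1) := by
          norm_num [mul_comm]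
      _ ≤ (∏ i ∈ Finset.range s', (2*n - (2*(i+1)+1))) * (2*n - (2*0+1)) := by
          have : 2*n - (2*0+1) = 2*n - 1 := by omega
          rw [this]
          exact Nat.mul_le_mul_right _ hterm
  have hppos : 0 < ∏ i ∈ Finset.range s, (2*i+1) :=
    Finset.prod_pos (fun i _ => by omega)
  refine Nat.le_of_mul_le_mul_right ?_ hppos
  calc (2*n-1) * n.choose s * ∏ i ∈ Finset.range s, (2*i+1)
      = n.choose s * ((2*n-1) * ∏ i ∈ Finset.range s, (2*i+1)) := by ring
    _ ≤ n.choose s * ∏ i ∈ Finset.range s, (2*n - (2*i+1)) := Nat.mul_le_mul_left _ hq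
    _ = (2*n).choose (2*s) * ∏ i ∈ Finset.range s, (2*i+1) := key.symm

lemma choose_ineq (n s : ℕ) (h1 : 1 ≤ s) (h2 : s ≤ n - 1) (hn : 1 ≤ n) :
    (2*n - 1) * n.choose s ≤ (2*n).choose (2*s) := by
  by_cases h : 2*s ≤ n+1
  · exact choose_ineq_half n s h1 h (by omega)
  · have := choose_ineq_half n (n-s) (by omega) (by omega) (by omega)
    have e1 : n.choose (n-s) = n.choose s := Nat.choose_symm (by omega)
    have e2 : 2*(n-s) = 2*n - 2*s := by omega
    rw [e1, e2] at this
    have e3 : (2*n).choose (2*n-2*s) = (2*n).choose (2*s) := Nat.choose_symm (by omega)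
    rw [e3] at this
    exact this

/-! ### Subset sums as polynomial coefficients -/

lemma lam_eq_coeff {k : ℕ} (S : Finset (Fin k)) (q : ℕ) :
    ∑ Z ∈ Finset.powersetCard q (Finset.univ : Finset (Fin k)), ((-1 : ℤ))^((S ∩ Z).card)
      = (((1 - Polynomial.X)^(S.card) * (1 + Polynomial.X)^(k - S.card) : Polynomial ℤ)).coeff q := by
  classical
  have expand : ((1 - X)^(S.card) * (1+X)^(k - S.card) : ℤ[X])
      = ∏ i : Fin k, ((if i ∈ S then -X else X) + 1) := by
    rw [← Finset.prod_mul_prod_compl S (fun i => (if i ∈ S then -X else X) + 1)]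
    have e1 : ∏ i ∈ S, ((if i ∈ S then -X else X) + 1) = (1-X : ℤ[X])^(S.card) := by
      rw [Finset.prod_congr rfl (fun i hi => by rw [if_pos hi]), Finset.prod_const]
      congr 1; ring
    have e2 : ∏ i ∈ Sᶜ, ((if i ∈ S then -X else X) + 1) = (1+X : ℤ[X])^(k - S.card) := by
      rw [Finset.prod_congr rfl (fun i hi => by rw [if_neg (Finset.mem_compl.mp hi)]),
        Finset.prod_const, Finset.card_compl, Fintype.card_fin]
      congr 1; ring
    rw [e1, e2]
  have expand2 : ∏ i : Fin k, ((if i ∈ S then -X else X) + 1)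
      = ∑ Z ∈ (Finset.univ : Finset (Fin k)).powerset,
          Polynomial.C ((-1:ℤ)^((S ∩ Z).card)) * X^(Z.card) := by
    rw [Finset.prod_add]
    refine Finset.sum_congr rfl fun Z hZ => ?_
    rw [Finset.prod_const_one, mul_one]
    rw [← Finset.prod_filter_mul_prod_filter_not Z (· ∈ S)]
    have e1 : ∏ i ∈ Z.filter (· ∈ S), ((if i ∈ S then -X else X) : ℤ[X]) = (-X)^((S ∩ Z).card) := by
      rw [Finset.prod_congr rfl (fun i hi => by rw [if_pos (Finset.mem_filter.mp hi).2]),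
        Finset.prod_const]
      congr 1
      rw [Finset.filter_mem_eq_inter, Finset.inter_comm]
    have e2 : ∏ i ∈ Z.filter (¬ · ∈ S), ((if i ∈ S then -X else X) : ℤ[X])
        = X^(Z.card - (S ∩ Z).card) := by
      rw [Finset.prod_congr rfl (fun i hi => by rw [if_neg (Finset.mem_filter.mp hi).2]),
        Finset.prod_const]
      congr 1
      rw [show Z.filter (¬ · ∈ S) = Z \ S from by ext i; simp [Finset.mem_sdiff]]
      rw [← Finset.sdiff_inter_self_left Z S, Finset.card_sdiff_of_subset Finset.inter_subset_left,
        Finset.inter_comm]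
    rw [e1, e2, neg_pow, mul_assoc, ← pow_add]
    have hle : (S ∩ Z).card ≤ Z.card := Finset.card_le_card Finset.inter_subset_right
    rw [Nat.add_sub_cancel' hle]
    congr 1
    rw [map_pow, map_neg, Polynomial.C_1]
  rw [expand, expand2, Polynomial.finset_sum_coeff]
  have hco : ∀ Z : Finset (Fin k), (Polynomial.C ((-1:ℤ)^((S ∩ Z).card)) * X^(Z.card)).coeff q
      = if Z.card = q then (-1:ℤ)^((S ∩ Z).card) else 0 := by
    intro Z
    rw [Polynomial.coeff_C_mul, Polynomial.coeff_X_pow]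
    by_cases h : Z.card = q
    · simp [h]
    · rw [if_neg (fun hh => h hh.symm), if_neg h, mul_zero]
  rw [Finset.sum_congr rfl (fun Z _ => hco Z)]
  rw [Finset.powersetCard_eq_filter, Finset.sum_filter]

lemma coeff_symm {k : ℕ} (w q : ℕ) :
    (k.choose w : ℤ) * (((1 - X)^w * (1 + X)^(k-w) : ℤ[X]).coeff q)
      = (k.choose q : ℤ) * (((1 - X)^q * (1 + X)^(k-q) : ℤ[X]).coeff w) := by
  classical
  have lhs : ∑ W ∈ Finset.powersetCard w (Finset.univ : Finset (Fin k)),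
      ∑ Z ∈ Finset.powersetCard q (Finset.univ : Finset (Fin k)), ((-1:ℤ))^((W ∩ Z).card)
      = (k.choose w : ℤ) * (((1 - X)^w * (1 + X)^(k-w) : ℤ[X]).coeff q) := by
    have hcon : ∀ W ∈ Finset.powersetCard w (Finset.univ : Finset (Fin k)),
        ∑ Z ∈ Finset.powersetCard q (Finset.univ : Finset (Fin k)), ((-1:ℤ))^((W ∩ Z).card)
          = ((1 - X)^w * (1 + X)^(k-w) : ℤ[X]).coeff q := by
      intro W hW
      have hcard : W.card = w := (Finset.mem_powersetCard_univ.mp hW)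
      rw [lam_eq_coeff W q, hcard]
    rw [Finset.sum_congr rfl hcon, Finset.sum_const, Finset.card_powersetCard,
      Finset.card_univ, Fintype.card_fin, nsmul_eq_mul]
  have rhs : ∑ W ∈ Finset.powersetCard w (Finset.univ : Finset (Fin k)),
      ∑ Z ∈ Finset.powersetCard q (Finset.univ : Finset (Fin k)), ((-1:ℤ))^((W ∩ Z).card)
      = (k.choose q : ℤ) * (((1 - X)^q * (1 + X)^(k-q) : ℤ[X]).coeff w) := by
    rw [Finset.sum_comm]
    have hcon : ∀ Z ∈ Finset.powersetCard q (Finset.univ : Finset (Fin k)),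
        ∑ W ∈ Finset.powersetCard w (Finset.univ : Finset (Fin k)), ((-1:ℤ))^((W ∩ Z).card)
          = ((1 - X)^q * (1 + X)^(k-q) : ℤ[X]).coeff w := by
      intro Z hZ
      have hcard : Z.card = q := (Finset.mem_powersetCard_univ.mp hZ)
      have : ∀ W ∈ Finset.powersetCard w (Finset.univ : Finset (Fin k)),
          ((-1:ℤ))^((W ∩ Z).card) = ((-1:ℤ))^((Z ∩ W).card) := by
        intro W _; rw [Finset.inter_comm]
      rw [Finset.sum_congr rfl this, lam_eq_coeff Z w, hcard]
    rw [Finset.sum_congr rfl hcon, Finset.sum_const, Finset.card_powersetCard,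
      Finset.card_univ, Fintype.card_fin, nsmul_eq_mul]
  rw [← lhs, rhs]

lemma middle_coeff (n : ℕ) (w : ℕ) :
    (((1 - X)^n * (1 + X)^n : ℤ[X])).coeff w
      = if w % 2 = 0 then ((-1:ℤ))^(w/2) * (n.choose (w/2) : ℤ) else 0 := by
  have e : ((1 - X)^n * (1 + X)^n : ℤ[X]) = (1 - X^2)^n := by
    rw [← mul_pow]
    congr 1
    ring
  have e2 : ((1 - X^2 : ℤ[X]))^n
      = ∑ j ∈ Finset.range (n+1), Polynomial.C ((-1:ℤ)^j * (n.choose j : ℤ)) * X^(2*j) := by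
    rw [sub_eq_add_neg, add_comm, add_pow]
    refine Finset.sum_congr rfl fun j hj => ?_
    rw [one_pow, mul_one, neg_pow, _root_.map_mul, map_pow, map_neg, Polynomial.C_1]
    rw [show ((X^2 : ℤ[X]))^j = X^(2*j) from by rw [← pow_mul], Polynomial.C_eq_natCast]
    push_cast
    ring
  rw [e, e2, Polynomial.finset_sum_coeff]
  have hco : ∀ j, (Polynomial.C ((-1:ℤ)^j * (n.choose j : ℤ)) * X^(2*j)).coeff w
      = if w = 2*j then (-1:ℤ)^j * (n.choose j : ℤ) else 0 := by
    intro j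
    rw [Polynomial.coeff_C_mul, Polynomial.coeff_X_pow]
    by_cases h : w = 2*j
    · simp [h]
    · rw [if_neg h, mul_zero, if_neg h]
  rw [Finset.sum_congr rfl (fun j _ => hco j)]
  by_cases hw : w % 2 = 0
  · rw [if_pos hw]
    by_cases hs : w/2 ≤ n
    · rw [Finset.sum_eq_single (w/2)]
      · rw [if_pos (by omega)]
      · intro j _ hj
        rw [if_neg (by omega)]
      · intro h
        exact absurd (Finset.mem_range.mpr (by omega)) h
    · rw [Finset.sum_eq_zero, Nat.choose_eq_zero_of_lt (by omega)]
      · push_cast; ring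
      · intro j hj
        have : j < n + 1 := Finset.mem_range.mp hj
        rw [if_neg (by omega)]
  · rw [if_neg hw, Finset.sum_eq_zero]
    intro j _
    rw [if_neg (by omega)]

/-- The key Krawtchouk eigenvalue bound. -/
lemma kraw_bound {k : ℕ} (hk4 : 4 ∣ k) (hkpos : 0 < k) (w : ℕ) (hw1 : 1 ≤ w) (hwk : w ≤ k) :
    0 ≤ (k - 1 : ℤ) * (((1 - X)^w * (1 + X)^(k-w) : ℤ[X]).coeff (k/2))
        + (k.choose (k/2) : ℤ) := by
  obtain ⟨p, hp⟩ := hk4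
  set n := k/2 with hn
  have hk2 : k = 2*n := by omega
  have hneven : n % 2 = 0 := by omega
  have hcw : (0:ℤ) < (k.choose w : ℤ) := by exact_mod_cast Nat.choose_pos hwk
  have key := coeff_symm (k := k) w n
  have hkn : k - n = n := by omega
  rw [hkn] at key
  have hmid := middle_coeff n w
  set cf : ℤ := ((1 - X)^w * (1 + X)^(k-w) : ℤ[X]).coeff n with hcf
  suffices h : 0 ≤ (k.choose w : ℤ) * ((k - 1 : ℤ) * cf + (k.choose n : ℤ)) by
    by_contra hneg
    push_neg at hneg
    nlinarith
  have expand : (k.choose w : ℤ) * ((k - 1 : ℤ) * cf + (k.choose n : ℤ))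
      = (k - 1 : ℤ) * ((k.choose n : ℤ) * (((1 - X)^n * (1 + X)^n : ℤ[X]).coeff w))
        + (k.choose w : ℤ) * (k.choose n : ℤ) := by
    rw [← key]; ring
  rw [expand, hmid]
  by_cases hw2 : w % 2 = 0
  · rw [if_pos hw2]
    set s := w / 2 with hs
    by_cases hpar : s % 2 = 0
    · -- even s : everything nonneg
      have h1 : ((-1:ℤ))^s = 1 := Even.neg_one_pow (Nat.even_iff.mpr hpar)
      rw [h1, one_mul]
      have : (0:ℤ) ≤ (k - 1 : ℤ) := by
        have : (1:ℤ) ≤ k := by exact_mod_cast hkpos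
        omega
      positivity
    · -- odd s : use the binomial inequality
      have h1 : ((-1:ℤ))^s = -1 := Odd.neg_one_pow (Nat.odd_iff.mpr (by omega))
      rw [h1]
      have hs1 : 1 ≤ s := by omega
      have hsn : s ≤ n - 1 := by
        have hsn' : s ≤ n := by omega
        rcases Nat.eq_or_lt_of_le hsn' with h | h
        · exfalso; omega
        · omega
      have hineq := choose_ineq n s hs1 hsn (by omega)
      have hk1 : (k - 1 : ℤ) = ((2*n - 1 : ℕ) : ℤ) := by
        push_cast
        omega
      have hw2s : w = 2*s := by omega
      have hchoosew : (k.choose w : ℤ) = (((2*n).choose (2*s) : ℕ) : ℤ) := by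
        rw [hw2s, ← hk2]
      have hcn : (0:ℤ) ≤ (k.choose n : ℤ) := by positivity
      calc (0:ℤ) ≤ ((((2*n).choose (2*s) : ℕ) : ℤ) - ((2*n - 1 : ℕ) : ℤ) * (n.choose s : ℤ))
            * (k.choose n : ℤ) := by
            apply mul_nonneg _ hcn
            have : (((2*n - 1) * n.choose s : ℕ) : ℤ) ≤ (((2*n).choose (2*s) : ℕ) : ℤ) := by
              exact_mod_cast hineq
            push_cast at this ⊢
            linarith
        _ = (k - 1 : ℤ) * ((k.choose n : ℤ) * (-1 * (n.choose s : ℤ)))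
            + (k.choose w : ℤ) * (k.choose n : ℤ) := by
            rw [hk1, hchoosew]
            ring
  · rw [if_neg hw2]
    have : (0:ℤ) ≤ (k.choose w : ℤ) * (k.choose n : ℤ) := by positivity
    linarith


section OrthCert
variable {k : ℕ}

instance : DecidableEq (PMVertex k) := fun u v =>
  decidable_of_iff (u.val = v.val) Subtype.ext_iff.symm

instance : DecidableRel (orthGraph k).Adj := fun u v =>
  instDecidableAnd (dp := instDecidableNot) (dq := decEq _ _)

/-- Pointwise product of sign vectors. -/
def pmmul (u v : PMVertex k) : PMVertex k :=
  ⟨fun i => u.val i * v.val i, fun i => by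
    rcases u.prop i with h1 | h1 <;> rcases v.prop i with h2 | h2 <;> simp [h1, h2]⟩

/-- The all-ones sign vector. -/
def pmone : PMVertex k := ⟨fun _ => 1, fun _ => Or.inl rfl⟩

lemma pmmul_eq_one_iff (u v : PMVertex k) :
    (∀ i, u.val i * v.val i = 1) ↔ u = v := by
  constructor
  · intro h
    apply Subtype.ext; funext i
    have hi := h i
    rcases u.prop i with h1 | h1 <;> rcases v.prop i with h2 | h2 <;>
      simp [h1, h2] at hi ⊢
  · rintro rfl i
    rcases u.prop i with h1 | h1 <;> rw [h1] <;> norm_num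

lemma pmmul_eq_pmone_iff (u v : PMVertex k) : pmmul u v = pmone ↔ u = v := by
  rw [← pmmul_eq_one_iff u v]
  constructor
  · intro h i
    have := congrFun (congrArg Subtype.val h) i
    exact this
  · intro h
    apply Subtype.ext; funext i
    exact h i

/-- Character sum over all subsets. -/
lemma char_sum (w : Fin k → ℤ) (hw : ∀ i, w i = 1 ∨ w i = -1) :
    ∑ S : Finset (Fin k), ∏ i ∈ S, (w i : ℂ)
      = if (∀ i, w i = 1) then ((2:ℂ)^k) else 0 := by
  classical
  have hrw : ∑ S : Finset (Fin k), ∏ i ∈ S, (w i : ℂ)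
      = ∏ i : Fin k, ((w i : ℂ) + 1) := by
    rw [Finset.prod_add]
    rw [← Finset.powerset_univ]
    refine (Finset.sum_congr rfl fun S _ => ?_).symm
    rw [Finset.prod_const_one, mul_one]
  rw [hrw]
  by_cases h : ∀ i, w i = 1
  · rw [if_pos h]
    rw [Finset.prod_congr rfl (fun i _ => by rw [h i]; norm_num : ∀ i ∈ Finset.univ, ((w i : ℂ) + 1) = 2)]
    rw [Finset.prod_const, Finset.card_univ, Fintype.card_fin]
  · rw [if_neg h]
    push_neg at h
    obtain ⟨i0, hi0⟩ := h
    have hneg : w i0 = -1 := (hw i0).resolve_left hi0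
    refine Finset.prod_eq_zero (Finset.mem_univ i0) ?_
    rw [hneg]
    norm_num

/-- Master identity for character sums. -/
lemma master (w x : PMVertex k → ℂ) :
    ∑ S : Finset (Fin k), (∑ z, w z * ∏ i ∈ S, (z.val i : ℂ))
        * ((∑ u, (∏ i ∈ S, (u.val i : ℂ)) * (starRingEnd ℂ) (x u))
          * (∑ v, (∏ i ∈ S, (v.val i : ℂ)) * x v))
      = (2:ℂ)^k * ∑ u, ∑ v, w (pmmul u v) * ((starRingEnd ℂ) (x u) * x v) := by
  classical
  have key : ∀ S : Finset (Fin k),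
      (∑ z, w z * ∏ i ∈ S, (z.val i : ℂ))
        * ((∑ u, (∏ i ∈ S, (u.val i : ℂ)) * (starRingEnd ℂ) (x u))
          * (∑ v, (∏ i ∈ S, (v.val i : ℂ)) * x v))
      = ∑ v, ∑ u, ∑ z, (w z * ((starRingEnd ℂ) (x u) * x v))
          * ∏ i ∈ S, (((pmmul z (pmmul u v)).val i : ℤ) : ℂ) := by
    intro S
    simp only [Finset.sum_mul, Finset.mul_sum]
    refine Finset.sum_congr rfl fun v _ => Finset.sum_congr rfl fun u _ =>
      Finset.sum_congr rfl fun z _ => ?_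
    have hp : ∏ i ∈ S, (((pmmul z (pmmul u v)).val i : ℤ) : ℂ)
        = (∏ i ∈ S, (z.val i : ℂ)) * ((∏ i ∈ S, (u.val i : ℂ)) * (∏ i ∈ S, (v.val i : ℂ))) := by
      rw [← Finset.prod_mul_distrib, ← Finset.prod_mul_distrib]
      refine Finset.prod_congr rfl fun i _ => ?_
      show (((z.val i) * ((u.val i) * (v.val i)) : ℤ) : ℂ) = _
      push_cast
      ring
    rw [hp]
    ring
  rw [Finset.sum_congr rfl (fun S _ => key S)]
  rw [Finset.sum_comm]
  rw [Finset.sum_congr rfl (fun v (_ : v ∈ Finset.univ) => Finset.sum_comm)]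
  rw [Finset.sum_congr rfl (fun v (_ : v ∈ Finset.univ) =>
    Finset.sum_congr rfl (fun u (_ : u ∈ Finset.univ) => Finset.sum_comm))]
  -- now : ∑ v, ∑ u, ∑ z, ∑ S, ...
  have inner : ∀ (v u z : PMVertex k),
      ∑ S : Finset (Fin k), (w z * ((starRingEnd ℂ) (x u) * x v))
          * ∏ i ∈ S, (((pmmul z (pmmul u v)).val i : ℤ) : ℂ)
      = (w z * ((starRingEnd ℂ) (x u) * x v))
          * (if z = pmmul u v then ((2:ℂ)^k) else 0) := by
    intro v u z
    rw [← Finset.mul_sum, char_sum _ (pmmul z (pmmul u v)).prop]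
    congr 1
    refine if_congr ?_ rfl rfl
    exact (pmmul_eq_one_iff z (pmmul u v)).trans ⟨fun h => h, fun h => h⟩
  rw [Finset.sum_congr rfl (fun v (_ : v ∈ Finset.univ) =>
    Finset.sum_congr rfl (fun u (_ : u ∈ Finset.univ) =>
      Finset.sum_congr rfl (fun z (_ : z ∈ Finset.univ) => inner v u z)))]
  have collapse : ∀ (v u : PMVertex k),
      ∑ z, (w z * ((starRingEnd ℂ) (x u) * x v))
          * (if z = pmmul u v then ((2:ℂ)^k) else 0)
      = (2:ℂ)^k * (w (pmmul u v) * ((starRingEnd ℂ) (x u) * x v)) := by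
    intro v u
    rw [Finset.sum_eq_single (pmmul u v)]
    · rw [if_pos rfl]; ring
    · intro z _ hz
      rw [if_neg hz, mul_zero]
    · intro h
      exact absurd (Finset.mem_univ _) h
  rw [Finset.sum_congr rfl (fun v (_ : v ∈ Finset.univ) =>
    Finset.sum_congr rfl (fun u (_ : u ∈ Finset.univ) => collapse v u))]
  rw [Finset.sum_comm, Finset.mul_sum]
  refine Finset.sum_congr rfl fun u _ => ?_
  rw [Finset.mul_sum]



/-- Set of coordinates where the sign vector is `-1`. -/
def negSet (z : PMVertex k) : Finset (Fin k) :=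
  Finset.univ.filter (fun i => z.val i = -1)

def negCard (z : PMVertex k) : ℕ := (negSet z).card

def invVertex (Z : Finset (Fin k)) : PMVertex k :=
  ⟨fun i => if i ∈ Z then -1 else 1, fun i => by by_cases h : i ∈ Z <;> simp [h]⟩

lemma negSet_invVertex (Z : Finset (Fin k)) : negSet (invVertex Z) = Z := by
  ext i
  simp only [negSet, Finset.mem_filter, Finset.mem_univ, true_and, invVertex]
  by_cases h : i ∈ Z <;> simp [h]

lemma invVertex_negSet (z : PMVertex k) : invVertex (negSet z) = z := by
  apply Subtype.ext; funext i
  show (if i ∈ negSet z then (-1:ℤ) else 1) = z.val i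
  by_cases h : z.val i = -1
  · rw [if_pos (by simp [negSet, h]), h]
  · rw [if_neg (by simp [negSet, h]), ((z.prop i).resolve_right h)]

lemma negCard_sum {M : Type*} [AddCommMonoid M] (q : ℕ) (f : Finset (Fin k) → M) :
    ∑ z : PMVertex k, (if negCard z = q then f (negSet z) else 0)
      = ∑ Z ∈ Finset.powersetCard q Finset.univ, f Z := by
  classical
  rw [← Finset.sum_filter]
  refine Finset.sum_nbij' (fun z => negSet z) (fun Z => invVertex Z) ?_ ?_ ?_ ?_ ?_
  · intro z hz
    rw [Finset.mem_powersetCard_univ]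
    exact (Finset.mem_filter.mp hz).2
  · intro Z hZ
    rw [Finset.mem_filter]
    refine ⟨Finset.mem_univ _, ?_⟩
    show negCard (invVertex Z) = q
    show (negSet (invVertex Z)).card = q
    rw [negSet_invVertex]
    exact Finset.mem_powersetCard_univ.mp hZ
  · intro z _; exact invVertex_negSet z
  · intro Z _; exact negSet_invVertex Z
  · intro z _; rfl

lemma chi_eq_pow (S : Finset (Fin k)) (z : PMVertex k) :
    (∏ i ∈ S, z.val i) = (-1:ℤ)^((S ∩ negSet z).card) := by
  rw [← Finset.prod_filter_mul_prod_filter_not S (fun i => z.val i = -1)]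
  have e1 : ∏ i ∈ S.filter (fun i => z.val i = -1), z.val i
      = (-1:ℤ)^((S ∩ negSet z).card) := by
    rw [Finset.prod_congr rfl (fun i hi => (Finset.mem_filter.mp hi).2), Finset.prod_const]
    congr 2
    ext i
    simp [negSet, Finset.mem_filter, Finset.mem_inter]
  have e2 : ∏ i ∈ S.filter (fun i => ¬ z.val i = -1), z.val i = 1 :=
    Finset.prod_eq_one (fun i hi => (z.prop i).resolve_right (Finset.mem_filter.mp hi).2)
  rw [e1, e2, mul_one]

def lamZ (S : Finset (Fin k)) : ℤ :=
  ∑ z : PMVertex k, (if negCard z = k/2 then ∏ i ∈ S, z.val i else 0)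

lemma lamZ_eq_coeff (S : Finset (Fin k)) :
    lamZ S = (((1 - X)^(S.card) * (1 + X)^(k - S.card) : ℤ[X])).coeff (k/2) := by
  rw [← lam_eq_coeff S (k/2), ← negCard_sum (k/2) (fun Z => (-1:ℤ)^((S ∩ Z).card))]
  refine Finset.sum_congr rfl fun z _ => ?_
  by_cases h : negCard z = k/2
  · rw [if_pos h, if_pos h, chi_eq_pow]
  · rw [if_neg h, if_neg h]

lemma lamZ_empty : lamZ (∅ : Finset (Fin k)) = (k.choose (k/2) : ℤ) := by
  have h1 : lamZ (∅ : Finset (Fin k))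
      = ∑ z : PMVertex k, (if negCard z = k/2 then (fun _ : Finset (Fin k) => (1:ℤ)) (negSet z) else 0) := by
    refine Finset.sum_congr rfl fun z _ => ?_
    rw [Finset.prod_empty]
  rw [h1, negCard_sum (k/2) (fun _ => (1:ℤ)), Finset.sum_const, Finset.card_powersetCard,
    Finset.card_univ, Fintype.card_fin, nsmul_eq_mul, mul_one]

lemma sum_mul_eq (u v : PMVertex k) :
    ∑ i, u.val i * v.val i = (k : ℤ) - 2 * (negCard (pmmul u v) : ℤ) := by
  have h1 : ∀ i, u.val i * v.val i = (if (pmmul u v).val i = -1 then (-1:ℤ) else 1) := by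
    intro i
    rcases (pmmul u v).prop i with h | h
    · rw [if_neg (by rw [h]; norm_num)]; exact h
    · rw [if_pos h]; exact h
  rw [Finset.sum_congr rfl (fun i _ => h1 i), Finset.sum_ite, Finset.sum_const, Finset.sum_const]
  have hcards := Finset.card_filter_add_card_filter_not
      (s := (Finset.univ : Finset (Fin k))) (p := fun i => (pmmul u v).val i = -1)
  rw [Finset.card_univ, Fintype.card_fin] at hcards
  have hns : (Finset.univ.filter (fun i => (pmmul u v).val i = -1)).card
      = negCard (pmmul u v) := rfl
  rw [hns] at hcards ⊢
  have hns2 : (Finset.univ.filter (fun i => ¬ (pmmul u v).val i = -1)).card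
      = k - negCard (pmmul u v) := by omega
  rw [hns2]
  simp only [nsmul_eq_mul, mul_one, mul_neg_one]
  omega

lemma adj_iff (hk2 : 2 ∣ k) (hkpos : 0 < k) (u v : PMVertex k) :
    (orthGraph k).Adj u v ↔ negCard (pmmul u v) = k/2 := by
  constructor
  · rintro ⟨hne, hsum⟩
    have h := sum_mul_eq u v
    rw [hsum] at h
    omega
  · intro h
    constructor
    · intro he
      have hzero : negCard (pmmul u v) = 0 := by
        show (negSet (pmmul u v)).card = 0
        rw [Finset.card_eq_zero]
        ext i
        simp only [negSet, Finset.mem_filter, Finset.mem_univ, true_and,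
          Finset.notMem_empty, iff_false]
        have hone : (pmmul u v).val i = 1 := by
          rcases (pmmul u v).prop i with hh | hh
          · exact hh
          · exfalso
            have h3 : u.val i * v.val i = -1 := hh
            rw [he] at h3
            rcases v.prop i with h2 | h2 <;> rw [h2] at h3 <;> norm_num at h3
        rw [hone]; norm_num
      omega
    · rw [sum_mul_eq u v, h]
      obtain ⟨t, rfl⟩ := hk2
      push_cast
      omega


/-- The ratio-bound certificate for the orthogonality graph is PSD. -/
lemma cert_orth_psd (hk4 : 4 ∣ k) (hkpos : 0 < k) :
    (Matrix.of fun u v : PMVertex k =>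
      (if u = v then ((2^k / k : ℝ) : ℂ) else 0) - 1
        + (if (orthGraph k).Adj u v then (((2^k - 2^k/k) / (k.choose (k/2)) : ℝ) : ℂ) else 0)).PosSemidef := by
  classical
  obtain ⟨p, hp⟩ := hk4
  have hk4' : 4 ≤ k := by omega
  set lam : ℝ := 2^k / k with hlam
  set D : ℝ := ((k.choose (k/2) : ℕ) : ℝ) with hD
  have hDpos : 0 < D := by
    rw [hD]; exact_mod_cast Nat.choose_pos (by omega)
  set c : ℝ := (2^k - lam) / D with hc
  have hkR : (0:ℝ) < k := by exact_mod_cast hkpos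
  have h2k : (0:ℝ) < 2^k := by positivity
  have hlam_pos : 0 < lam := by rw [hlam]; positivity
  have hk1R : (1:ℝ) ≤ (k:ℝ) := by exact_mod_cast hkpos
  have hlam_le : lam ≤ 2^k := by
    rw [hlam, div_le_iff₀ hkR]
    nlinarith [h2k, hk1R]
  have hc0 : 0 ≤ c := by
    rw [hc]
    apply div_nonneg _ hDpos.le
    linarith
  refine Matrix.PosSemidef.of_dotProduct_mulVec_nonneg ?_ ?_
  · ext u v
    simp only [Matrix.conjTranspose_apply, Matrix.of_apply]
    by_cases h1 : u = v
    · subst h1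
      rw [if_pos rfl, if_neg ((orthGraph k).loopless.irrefl u)]
      simp [Complex.conj_ofReal]
    · have h1' : ¬ v = u := fun h => h1 h.symm
      by_cases h2 : (orthGraph k).Adj u v
      · have h2' : (orthGraph k).Adj v u := h2.symm
        rw [if_neg h1', if_pos h2', if_neg h1, if_pos h2]
        simp [Complex.conj_ofReal]
      · have h2' : ¬ (orthGraph k).Adj v u := fun h => h2 h.symm
        rw [if_neg h1', if_neg h2', if_neg h1, if_neg h2]
        simp
  · intro x
    have hmv : (Matrix.of fun u v : PMVertex k =>
        (if u = v then ((lam : ℝ) : ℂ) else 0) - 1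
          + (if (orthGraph k).Adj u v then ((c : ℝ) : ℂ) else 0)).mulVec x
        = fun u => ((lam:ℝ):ℂ) * x u - (∑ v, x v)
            + ((c:ℝ):ℂ) * ∑ v, (if (orthGraph k).Adj u v then x v else 0) := by
      funext u
      simp only [Matrix.mulVec, dotProduct, Matrix.of_apply, sub_mul, add_mul, one_mul,
        ite_mul, zero_mul]
      rw [Finset.sum_add_distrib, Finset.sum_sub_distrib, Finset.sum_ite_eq,
        if_pos (Finset.mem_univ u), Finset.mul_sum]
      congr 1
      refine Finset.sum_congr rfl fun v _ => ?_
      split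
      · rfl
      · rw [mul_zero]
    rw [hmv]
    set T1 : ℂ := ∑ u, (starRingEnd ℂ) (x u) * x u with hT1
    set T2 : ℂ := (∑ u, (starRingEnd ℂ) (x u)) * (∑ v, x v) with hT2
    set T3 : ℂ := ∑ u, ∑ v, (if (orthGraph k).Adj u v then (starRingEnd ℂ) (x u) * x v else 0)
      with hT3
    have hdot : star x ⬝ᵥ (fun u => ((lam:ℝ):ℂ) * x u - (∑ v, x v)
            + ((c:ℝ):ℂ) * ∑ v, (if (orthGraph k).Adj u v then x v else 0))
        = ((lam:ℝ):ℂ) * T1 - T2 + ((c:ℝ):ℂ) * T3 := by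
      simp only [dotProduct, Pi.star_apply, RCLike.star_def, mul_sub, mul_add,
        Finset.sum_add_distrib, Finset.sum_sub_distrib]
      congr 1
      · congr 1
        · rw [hT1, Finset.mul_sum]
          exact Finset.sum_congr rfl fun u _ => by ring
        · rw [hT2, Finset.sum_mul]
      · rw [hT3, Finset.mul_sum]
        refine Finset.sum_congr rfl fun u _ => ?_
        rw [mul_left_comm]
        congr 1
        rw [Finset.mul_sum]
        refine Finset.sum_congr rfl fun v _ => ?_
        split
        · rfl
        · rw [mul_zero]
    rw [hdot]
    set xh : Finset (Fin k) → ℂ := fun S => ∑ v, (∏ i ∈ S, ((v.val i : ℤ) : ℂ)) * x v with hxh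
    have hcs : ∀ S : Finset (Fin k),
        (∑ u, (∏ i ∈ S, ((u.val i : ℤ):ℂ)) * (starRingEnd ℂ) (x u)) = (starRingEnd ℂ) (xh S) := by
      intro S
      rw [hxh, map_sum]
      refine Finset.sum_congr rfl fun u _ => ?_
      rw [_root_.map_mul]
      congr 1
      rw [map_prod]
      exact Finset.prod_congr rfl fun i _ => (map_intCast (starRingEnd ℂ) (u.val i)).symm
    have P1 : ∑ S : Finset (Fin k), (starRingEnd ℂ) (xh S) * xh S = (2:ℂ)^k * T1 := by
      have hm := master (k := k) (fun z => if z = pmone then (1:ℂ) else 0) x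
      have hco : ∀ S : Finset (Fin k),
          (∑ z : PMVertex k, (if z = pmone then (1:ℂ) else 0) * ∏ i ∈ S, ((z.val i : ℤ):ℂ)) = 1 := by
        intro S
        rw [Finset.sum_eq_single (pmone : PMVertex k)]
        · rw [if_pos rfl, one_mul]
          exact Finset.prod_eq_one fun i _ => by norm_num [pmone]
        · intro z _ hz; rw [if_neg hz, zero_mul]
        · intro h; exact absurd (Finset.mem_univ _) h
      rw [Finset.sum_congr rfl (fun S _ => by rw [hco S, one_mul]), Finset.sum_congr rfl
        (fun S (_ : S ∈ Finset.univ) => by rw [hcs S])] at hm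
      rw [hm, hT1]
      congr 1
      refine Finset.sum_congr rfl fun u _ => ?_
      rw [Finset.sum_eq_single u]
      · rw [if_pos ((pmmul_eq_pmone_iff u u).mpr rfl), one_mul]
      · intro v _ hv
        rw [if_neg (fun hh => hv (((pmmul_eq_pmone_iff u v).mp hh).symm)), zero_mul]
      · intro h; exact absurd (Finset.mem_univ _) h
    have P2 : ∑ S : Finset (Fin k), ((lamZ S : ℤ) : ℂ) * ((starRingEnd ℂ) (xh S) * xh S)
        = (2:ℂ)^k * T3 := by
      have hm := master (k := k) (fun z => if negCard z = k/2 then (1:ℂ) else 0) x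
      have hco : ∀ S : Finset (Fin k),
          (∑ z : PMVertex k, (if negCard z = k/2 then (1:ℂ) else 0) * ∏ i ∈ S, ((z.val i : ℤ):ℂ))
            = ((lamZ S : ℤ) : ℂ) := by
        intro S
        show _ = ((∑ z : PMVertex k, (if negCard z = k/2 then ∏ i ∈ S, z.val i else 0) : ℤ) : ℂ)
        rw [Int.cast_sum]
        refine Finset.sum_congr rfl fun z _ => ?_
        by_cases h : negCard z = k/2
        · rw [if_pos h, if_pos h, one_mul, Int.cast_prod]
        · rw [if_neg h, if_neg h, zero_mul, Int.cast_zero]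
      rw [Finset.sum_congr rfl (fun S _ => by rw [hco S]), Finset.sum_congr rfl
        (fun S (_ : S ∈ Finset.univ) => by rw [hcs S])] at hm
      rw [hm, hT3]
      congr 1
      refine Finset.sum_congr rfl fun u _ => Finset.sum_congr rfl fun v _ => ?_
      by_cases hA : (orthGraph k).Adj u v
      · rw [if_pos hA, if_pos ((adj_iff ⟨2*p, by omega⟩ hkpos u v).mp hA), one_mul]
      · rw [if_neg hA, if_neg (fun hh => hA ((adj_iff ⟨2*p, by omega⟩ hkpos u v).mpr hh)),
          zero_mul]
    have P3 : (starRingEnd ℂ) (xh ∅) * xh ∅ = T2 := by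
      have he : xh (∅ : Finset (Fin k)) = ∑ v, x v := by
        rw [hxh]
        refine Finset.sum_congr rfl fun v _ => by rw [Finset.prod_empty, one_mul]
      rw [he, hT2, map_sum]
    set nsq : Finset (Fin k) → ℝ := fun S => Complex.normSq (xh S) with hnsq
    have hA : ∀ S, (starRingEnd ℂ) (xh S) * xh S = ((nsq S : ℝ) : ℂ) := fun S =>
      (Complex.normSq_eq_conj_mul_self).symm
    set mu : Finset (Fin k) → ℝ := fun S => lam + c * ((lamZ S : ℤ) : ℝ) with hmu
    have hmuempty : mu ∅ = 2^k := by
      rw [hmu]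
      simp only []
      rw [lamZ_empty]
      push_cast
      rw [hc, hD]
      field_simp
      have hD0 : ((k.choose (k/2) : ℕ) : ℝ) ≠ 0 := by exact_mod_cast (Nat.choose_pos (by omega)).ne'
      rw [mul_div_assoc, div_self hD0, mul_one]; ring
    have hmu0 : ∀ S, 0 ≤ mu S := by
      intro S
      rw [hmu]
      simp only []
      rcases le_or_gt 0 (((lamZ S : ℤ)) : ℝ) with h | h
      · exact add_nonneg hlam_pos.le (mul_nonneg hc0 h)
      · have hSne : S ≠ ∅ := by
          intro hS
          rw [hS, lamZ_empty] at h
          rw [hD] at hDpos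
          push_cast at h
          linarith
        have hw1 : 1 ≤ S.card := Finset.card_pos.mpr (Finset.nonempty_iff_ne_empty.mpr hSne)
        have hwk : S.card ≤ k := by
          have := Finset.card_le_univ S
          simpa using this
        have hkb := kraw_bound ⟨p, hp⟩ hkpos S.card hw1 hwk
        rw [← lamZ_eq_coeff S] at hkb
        have hkbR : 0 ≤ ((k:ℝ) - 1) * ((lamZ S : ℤ) : ℝ) + D := by
          rw [hD]
          exact_mod_cast hkb
        have hcd : c * D = lam * ((k:ℝ) - 1) := by
          rw [hc, hlam]
          field_simp
        have h1 : 0 ≤ c * (((k:ℝ)-1) * ((lamZ S : ℤ):ℝ) + D) := mul_nonneg hc0 hkbR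
        have hk1 : (0:ℝ) < (k:ℝ) - 1 := by
          have : (4:ℝ) ≤ (k:ℝ) := by exact_mod_cast hk4'
          linarith
        nlinarith [h1, hcd, hk1]
    have hqid : ((2:ℂ)^k) * (((lam:ℝ):ℂ) * T1 - T2 + ((c:ℝ):ℂ) * T3)
        = ((∑ S : Finset (Fin k), mu S * nsq S - 2^k * nsq ∅ : ℝ) : ℂ) := by
      have e1 : ((2:ℂ)^k) * T1 = ∑ S : Finset (Fin k), ((nsq S : ℝ) : ℂ) := by
        rw [← P1]
        exact Finset.sum_congr rfl fun S _ => hA S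
      have e2 : ((2:ℂ)^k) * T3 = ∑ S : Finset (Fin k), ((lamZ S : ℤ) : ℂ) * ((nsq S : ℝ) : ℂ) := by
        rw [← P2]
        exact Finset.sum_congr rfl fun S _ => by rw [hA S]
      have e3 : T2 = ((nsq ∅ : ℝ) : ℂ) := by rw [← P3, hA]
      calc ((2:ℂ)^k) * (((lam:ℝ):ℂ) * T1 - T2 + ((c:ℝ):ℂ) * T3)
          = ((lam:ℝ):ℂ) * (((2:ℂ)^k) * T1) - ((2:ℂ)^k) * T2
            + ((c:ℝ):ℂ) * (((2:ℂ)^k) * T3) := by ring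
        _ = ((lam:ℝ):ℂ) * (∑ S : Finset (Fin k), ((nsq S : ℝ) : ℂ))
            - ((2:ℂ)^k) * ((nsq ∅ : ℝ) : ℂ)
            + ((c:ℝ):ℂ) * (∑ S : Finset (Fin k), ((lamZ S : ℤ) : ℂ) * ((nsq S : ℝ) : ℂ)) := by
            rw [e1, e2, e3]
        _ = _ := by
            simp only [hmu]
            push_cast
            rw [Finset.mul_sum, Finset.mul_sum, sub_add_eq_add_sub, ← Finset.sum_add_distrib]
            congr 1
            refine Finset.sum_congr rfl fun S _ => ?_
            ring
    have hreal : 0 ≤ ∑ S : Finset (Fin k), mu S * nsq S - 2^k * nsq ∅ := by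
      have hsingle : mu ∅ * nsq ∅ ≤ ∑ S : Finset (Fin k), mu S * nsq S :=
        Finset.single_le_sum (f := fun S => mu S * nsq S)
          (fun S _ => mul_nonneg (hmu0 S) (Complex.normSq_nonneg _)) (Finset.mem_univ ∅)
      rw [hmuempty] at hsingle
      linarith
    have h2ne : ((2:ℂ)^k) ≠ 0 := pow_ne_zero _ two_ne_zero
    have hfin : ((lam:ℝ):ℂ) * T1 - T2 + ((c:ℝ):ℂ) * T3
        = (((∑ S : Finset (Fin k), mu S * nsq S - 2^k * nsq ∅) / 2^k : ℝ) : ℂ) := by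
      apply mul_left_cancel₀ h2ne
      rw [hqid, Complex.ofReal_div]
      push_cast
      rw [← mul_div_assoc, mul_div_cancel_left₀ _ h2ne]
    rw [hfin]
    refine Complex.zero_le_real.mpr ?_
    exact div_nonneg hreal (by positivity)

end OrthCert


/-! ### The joint construction for k copies -/

section Construction
variable {k : ℕ}

def boolEquiv : (Fin k → Bool) ≃ PMVertex k where
  toFun f := ⟨fun i => if f i then 1 else -1, fun i => by by_cases h : f i <;> simp [h]⟩
  invFun u := fun i => decide (u.val i = 1)
  left_inv f := by
    funext i
    by_cases h : f i <;> simp [h]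
  right_inv u := by
    apply Subtype.ext; funext i
    rcases u.prop i with h | h <;> simp [h]

lemma card_pm : Fintype.card (PMVertex k) = 2^k := by
  rw [← Fintype.card_congr (boolEquiv (k := k))]
  simp

/-- Root-of-unity exponential. -/
def E (k : ℕ) (t : ℤ) : ℂ := Complex.exp (2 * Real.pi * Complex.I * t / k)

lemma E_add (t s : ℤ) : E k t * E k s = E k (t + s) := by
  rw [E, E, E, ← Complex.exp_add]
  congr 1
  push_cast
  ring

lemma E_zero : E k 0 = 1 := by
  simp [E]

lemma E_conj (t : ℤ) : (starRingEnd ℂ) (E k t) = E k (-t) := by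
  rw [E, E, ← Complex.exp_conj]
  congr 1
  simp only [map_div₀, _root_.map_mul, Complex.conj_I, Complex.conj_ofReal, map_ofNat,
    map_intCast, map_natCast]
  push_cast
  ring

lemma E_pow (t : ℤ) (c : ℕ) : (E k t)^c = E k (t * c) := by
  rw [E, E, ← Complex.exp_nat_mul]
  congr 1
  push_cast
  ring

lemma E_mul_k (hk : 0 < k) (t : ℤ) : E k (t * k) = 1 := by
  have hkne : (k:ℂ) ≠ 0 := by exact_mod_cast hk.ne'
  rw [E, show (2 * (Real.pi:ℂ) * Complex.I * ((t * k : ℤ) : ℂ) / k) = (t:ℂ) * (2 * Real.pi * Complex.I) from by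
    push_cast; field_simp]
  exact Complex.exp_int_mul_two_pi_mul_I t

lemma E_geom (hk : 0 < k) (t : ℤ) (ht : ¬ (k:ℤ) ∣ t) : ∑ c : Fin k, E k (t * c) = 0 := by
  have hπ : (Real.pi : ℂ) ≠ 0 := by exact_mod_cast Real.pi_ne_zero
  have hkne : (k:ℂ) ≠ 0 := by exact_mod_cast hk.ne'
  have h2πI : (2 * (Real.pi:ℂ) * Complex.I) ≠ 0 := by
    simp [hπ, Complex.I_ne_zero]
  have hEne : E k t ≠ 1 := by
    intro h
    rw [E, Complex.exp_eq_one_iff] at h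
    obtain ⟨n, hn⟩ := h
    apply ht
    have hteq : (t : ℂ) = (n : ℂ) * k := by
      have h1 : 2 * (Real.pi:ℂ) * Complex.I * t = (n:ℂ) * (2 * Real.pi * Complex.I) * k := by
        rw [div_eq_iff hkne] at hn
        linear_combination hn
      have h2 : (2 * (Real.pi:ℂ) * Complex.I) * (t:ℂ) = (2 * (Real.pi:ℂ) * Complex.I) * ((n:ℂ) * k) := by
        linear_combination h1
      exact mul_left_cancel₀ h2πI h2
    have hti : t = n * k := by exact_mod_cast hteq
    exact ⟨n, by rw [hti]; ring⟩
  have hsum : ∑ c : Fin k, E k (t * c) = ∑ c ∈ Finset.range k, (E k t)^c := by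
    rw [← Fin.sum_univ_eq_sum_range (fun c => (E k t)^c) k]
    exact Finset.sum_congr rfl fun c _ => (E_pow t c).symm
  rw [hsum, geom_sum_eq hEne, E_pow, E_mul_k hk, sub_self, zero_div]

/-- The vector used in the construction. -/
def kvec (x : PMVertex k) (c : Fin k) : Fin k → ℂ :=
  fun r => ((x.val r : ℤ) : ℂ) * E k (((r : ℕ) : ℤ) * ((c : ℕ) : ℤ)) / k

/-- Rank-one operator built from `kvec`. -/
def kmat (x : PMVertex k) (c : Fin k) : Matrix (Fin k) (Fin k) ℂ :=
  Matrix.of fun r s => kvec x c r * (starRingEnd ℂ) (kvec x c s)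

lemma kmat_psd (x : PMVertex k) (c : Fin k) : (kmat x c).PosSemidef := by
  refine Matrix.PosSemidef.of_dotProduct_mulVec_nonneg ?_ ?_
  · ext r s
    simp only [kmat, Matrix.conjTranspose_apply, Matrix.of_apply, star_mul', RCLike.star_def,
      _root_.map_mul, Complex.conj_conj]
    ring
  · intro y
    have hval : star y ⬝ᵥ (kmat x c).mulVec y
        = (starRingEnd ℂ) (∑ s, (starRingEnd ℂ) (kvec x c s) * y s)
          * (∑ s, (starRingEnd ℂ) (kvec x c s) * y s) := by
      simp only [dotProduct, Matrix.mulVec, Pi.star_apply, RCLike.star_def, kmat,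
        Matrix.of_apply, map_sum, _root_.map_mul, Complex.conj_conj]
      rw [Finset.sum_mul_sum]
      refine Finset.sum_congr rfl fun r _ => ?_
      rw [Finset.mul_sum]
      exact Finset.sum_congr rfl fun s _ => by ring
    rw [hval, ← Complex.normSq_eq_conj_mul_self]
    exact Complex.zero_le_real.mpr (Complex.normSq_nonneg _)

lemma pm_val_sq (x : PMVertex k) (r : Fin k) : (x.val r) * (x.val r) = 1 := by
  rcases x.prop r with h | h <;> rw [h] <;> norm_num

lemma kmat_sum (hk : 0 < k) (x : PMVertex k) :
    ∑ c : Fin k, kmat x c = Matrix.diagonal (fun _ : Fin k => (1 : ℂ)/k) := by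
  have hkne : (k:ℂ) ≠ 0 := by exact_mod_cast hk.ne'
  ext r s
  simp only [Matrix.sum_apply, kmat, Matrix.of_apply, Matrix.diagonal_apply]
  have hterm : ∀ c : Fin k, kvec x c r * (starRingEnd ℂ) (kvec x c s)
      = ((x.val r : ℤ) : ℂ) * ((x.val s : ℤ) : ℂ) / (k^2)
        * E k ((((r:ℕ):ℤ) - ((s:ℕ):ℤ)) * ((c:ℕ):ℤ)) := by
    intro c
    simp only [kvec, map_div₀, _root_.map_mul, map_intCast, map_natCast, E_conj]
    rw [show (-((((s:ℕ):ℤ)) * ((c:ℕ):ℤ))) = (-((s:ℕ):ℤ)) * ((c:ℕ):ℤ) from by ring] at *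
    rw [show ((((r:ℕ):ℤ) - ((s:ℕ):ℤ)) * ((c:ℕ):ℤ)) = (((r:ℕ):ℤ)) * ((c:ℕ):ℤ) + (-((s:ℕ):ℤ)) * ((c:ℕ):ℤ) from by ring]
    rw [← E_add]
    field_simp
  rw [Finset.sum_congr rfl (fun c _ => hterm c), ← Finset.mul_sum]
  by_cases h : r = s
  · subst h
    rw [if_pos rfl]
    have : ∀ c : Fin k, E k ((((r:ℕ):ℤ) - ((r:ℕ):ℤ)) * ((c:ℕ):ℤ)) = 1 := by
      intro c
      rw [show ((((r:ℕ):ℤ) - ((r:ℕ):ℤ)) * ((c:ℕ):ℤ)) = 0 from by ring, E_zero]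
    rw [Finset.sum_congr rfl (fun c _ => this c), Finset.sum_const, Finset.card_univ,
      Fintype.card_fin, nsmul_eq_mul, mul_one]
    have hsq : ((x.val r : ℤ) : ℂ) * ((x.val r : ℤ) : ℂ) = 1 := by
      rw [← Int.cast_mul, pm_val_sq, Int.cast_one]
    rw [hsq]
    field_simp
  · rw [if_neg h]
    have hdvd : ¬ (k:ℤ) ∣ (((r:ℕ):ℤ) - ((s:ℕ):ℤ)) := by
      intro hdl
      have habs : |((r:ℕ):ℤ) - ((s:ℕ):ℤ)| < (k:ℤ) := by
        have hr := r.isLt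
        have hs := s.isLt
        rw [abs_lt]
        constructor <;> [skip; skip] <;> omega
      have hz := Int.eq_zero_of_abs_lt_dvd hdl habs
      have heq : ((r:ℕ):ℤ) = ((s:ℕ):ℤ) := by omega
      exact h (Fin.ext (by exact_mod_cast heq))
    rw [E_geom hk _ hdvd, mul_zero]

lemma kmat_orth (hk : 0 < k) {x y : PMVertex k} (c : Fin k)
    (hxy : ∑ i, x.val i * y.val i = 0) : kmat x c * kmat y c = 0 := by
  have hkne : (k:ℂ) ≠ 0 := by exact_mod_cast hk.ne'
  have hterm : ∀ t : Fin k, (starRingEnd ℂ) (kvec x c t) * kvec y c t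
      = ((x.val t : ℤ):ℂ) * ((y.val t : ℤ):ℂ) / ((k:ℂ)^2) := by
    intro t
    simp only [kvec, map_div₀, _root_.map_mul, map_intCast, map_natCast, E_conj]
    have hE : E k (-((((t:ℕ):ℤ)) * ((c:ℕ):ℤ))) * E k ((((t:ℕ):ℤ)) * ((c:ℕ):ℤ)) = 1 := by
      rw [E_add, show -((((t:ℕ):ℤ)) * ((c:ℕ):ℤ)) + (((t:ℕ):ℤ)) * ((c:ℕ):ℤ) = 0 from by ring,
        E_zero]
    field_simp
    linear_combination (((x.val t : ℤ):ℂ) * ((y.val t : ℤ):ℂ)) * hE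
  have hinner : ∑ t, (starRingEnd ℂ) (kvec x c t) * kvec y c t = 0 := by
    rw [Finset.sum_congr rfl (fun t _ => hterm t), ← Finset.sum_div]
    have hz : ∑ t : Fin k, ((x.val t : ℤ):ℂ) * ((y.val t : ℤ):ℂ) = 0 := by
      have hcast := congrArg (Int.cast : ℤ → ℂ) hxy
      push_cast at hcast
      simpa using hcast
    rw [hz, zero_div]
  ext r s
  simp only [Matrix.mul_apply, kmat, Matrix.of_apply, Matrix.zero_apply]
  calc ∑ t, (kvec x c r * (starRingEnd ℂ) (kvec x c t)) * (kvec y c t * (starRingEnd ℂ) (kvec y c s))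
      = (kvec x c r * (starRingEnd ℂ) (kvec y c s))
          * ∑ t, (starRingEnd ℂ) (kvec x c t) * kvec y c t := by
        rw [Finset.mul_sum]
        exact Finset.sum_congr rfl fun t _ => by ring
    _ = 0 := by rw [hinner, mul_zero]

end Construction

/-- for `k` a positive multiple of four that is not a power of two,
`α*(Ω_k^{+k}) > k · α*(Ω_k)`. -/
theorem orthGraph_joint_advantage (k : ℕ) (hpos : 0 < k) (h4 : 4 ∣ k)
    (hnp : ∀ m : ℕ, k ≠ 2 ^ m) :
    k * qIndepNum (orthGraph k) < qIndepNum (copies (orthGraph k) k) := by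
  classical
  obtain ⟨p, hp⟩ := h4
  have hk4 : 4 ≤ k := by omega
  set lam : ℝ := 2^k / k with hlam
  set D : ℝ := ((k.choose (k/2) : ℕ) : ℝ) with hD
  have hDpos : 0 < D := by rw [hD]; exact_mod_cast Nat.choose_pos (by omega)
  set c : ℝ := (2^k - lam)/D with hc
  have hkR : (0:ℝ) < k := by exact_mod_cast hpos
  have h2k : (0:ℝ) < 2^k := by positivity
  have hk1R : (1:ℝ) ≤ k := by exact_mod_cast hpos
  have hkRne : (k:ℝ) ≠ 0 := hkR.ne'
  have hlamk : lam * k = 2^k := by rw [hlam]; field_simp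
  have hlam_pos : 0 < lam := by rw [hlam]; positivity
  have hlam_le : lam ≤ 2^k := by nlinarith
  have hc0 : 0 ≤ c := by rw [hc]; apply div_nonneg _ hDpos.le; linarith
  have hDk : (k:ℝ) ≤ D := by
    rw [hD]
    have h1 := Nat.choose_le_middle 1 k
    rw [Nat.choose_one_right] at h1
    exact_mod_cast h1
  have hcl : c ≤ lam := by
    rw [hc, div_le_iff₀ hDpos]
    nlinarith [hlamk, hDk, hlam_pos]
  -- upper bound for the single-graph quantity
  have hbound : ∀ m ∈ {m | ∃ (d : ℕ) (ρ : Matrix (Fin d) (Fin d) ℂ)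
      (σ : Fin m → PMVertex k → Matrix (Fin d) (Fin d) ℂ),
      ρ.PosSemidef ∧ ρ.trace = 1 ∧ (∀ i u, (σ i u).PosSemidef) ∧
      (∀ i, ∑ u, σ i u = ρ) ∧
      ∀ i j u v, i ≠ j → (u = v ∨ (orthGraph k).Adj u v) → σ i u * σ j v = 0},
      (m : ℝ) ≤ lam := by
    rintro m ⟨d, ρ, σ, hρ, htr, hσ, hsum, horth⟩
    refine qbound (orthGraph k) lam c hc0 hcl
      (Matrix.of fun u v : PMVertex k =>
        (if u = v then ((lam : ℝ) : ℂ) else 0) - 1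
          + (if (orthGraph k).Adj u v then ((c : ℝ) : ℂ) else 0))
      ?_ ?_ ?_ ?_ ρ σ hρ htr hσ hsum horth
    · exact cert_orth_psd ⟨p, hp⟩ hpos
    · intro u
      rw [Matrix.of_apply, if_pos rfl, if_neg ((orthGraph k).loopless.irrefl u)]
      ring
    · intro u v h1 h2
      rw [Matrix.of_apply, if_neg h1, if_neg h2]
      ring
    · intro u v h
      rw [Matrix.of_apply, if_neg ((orthGraph k).ne_of_adj h), if_pos h]
      ring
  have h0mem : (0:ℕ) ∈ {m | ∃ (d : ℕ) (ρ : Matrix (Fin d) (Fin d) ℂ)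
      (σ : Fin m → PMVertex k → Matrix (Fin d) (Fin d) ℂ),
      ρ.PosSemidef ∧ ρ.trace = 1 ∧ (∀ i u, (σ i u).PosSemidef) ∧
      (∀ i, ∑ u, σ i u = ρ) ∧
      ∀ i j u v, i ≠ j → (u = v ∨ (orthGraph k).Adj u v) → σ i u * σ j v = 0} := by
    refine ⟨1, 1, fun i => i.elim0, Matrix.PosSemidef.one, by simp, fun i => i.elim0,
      fun i => i.elim0, fun i => i.elim0⟩
  have hbdd : BddAbove {m | ∃ (d : ℕ) (ρ : Matrix (Fin d) (Fin d) ℂ)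
      (σ : Fin m → PMVertex k → Matrix (Fin d) (Fin d) ℂ),
      ρ.PosSemidef ∧ ρ.trace = 1 ∧ (∀ i u, (σ i u).PosSemidef) ∧
      (∀ i, ∑ u, σ i u = ρ) ∧
      ∀ i j u v, i ≠ j → (u = v ∨ (orthGraph k).Adj u v) → σ i u * σ j v = 0} := by
    refine ⟨2^k, fun m hm => ?_⟩
    have h1 := hbound m hm
    have h2 : (m:ℝ) ≤ ((2^k : ℕ) : ℝ) := by push_cast; linarith
    exact_mod_cast h2
  have hsup_mem : qIndepNum (orthGraph k) ∈ {m | ∃ (d : ℕ) (ρ : Matrix (Fin d) (Fin d) ℂ)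
      (σ : Fin m → PMVertex k → Matrix (Fin d) (Fin d) ℂ),
      ρ.PosSemidef ∧ ρ.trace = 1 ∧ (∀ i u, (σ i u).PosSemidef) ∧
      (∀ i, ∑ u, σ i u = ρ) ∧
      ∀ i j u v, i ≠ j → (u = v ∨ (orthGraph k).Adj u v) → σ i u * σ j v = 0} :=
    Nat.sSup_mem ⟨0, h0mem⟩ hbdd
  have hkm : k * qIndepNum (orthGraph k) ≤ 2^k := by
    have hr := hbound _ hsup_mem
    have h2 : ((k * qIndepNum (orthGraph k) : ℕ) : ℝ) ≤ ((2^k : ℕ) : ℝ) := by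
      push_cast
      nlinarith [hr, hkR, hlamk]
    exact_mod_cast h2
  have hne : k * qIndepNum (orthGraph k) ≠ 2^k := by
    intro he
    have hdvd : k ∣ 2^k := ⟨qIndepNum (orthGraph k), he.symm⟩
    obtain ⟨j, _, hkj⟩ := (Nat.dvd_prime_pow Nat.prime_two).mp hdvd
    exact hnp j hkj
  -- lower bound side
  have hCbdd : BddAbove {m | ∃ (d : ℕ) (ρ : Matrix (Fin d) (Fin d) ℂ)
      (σ : Fin m → (PMVertex k × Fin k) → Matrix (Fin d) (Fin d) ℂ),
      ρ.PosSemidef ∧ ρ.trace = 1 ∧ (∀ i u, (σ i u).PosSemidef) ∧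
      (∀ i, ∑ u, σ i u = ρ) ∧
      ∀ i j u v, i ≠ j → (u = v ∨ (copies (orthGraph k) k).Adj u v) → σ i u * σ j v = 0} := by
    refine ⟨Fintype.card (PMVertex k × Fin k), fun m hm => ?_⟩
    obtain ⟨d, ρ, σ, hρ, htr, hσ, hsum, horth⟩ := hm
    have h1 := qbound_card (copies (orthGraph k) k) ρ σ hρ htr hσ hsum horth
    exact_mod_cast h1
  have hCmem : (2^k : ℕ) ∈ {m | ∃ (d : ℕ) (ρ : Matrix (Fin d) (Fin d) ℂ)
      (σ : Fin m → (PMVertex k × Fin k) → Matrix (Fin d) (Fin d) ℂ),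
      ρ.PosSemidef ∧ ρ.trace = 1 ∧ (∀ i u, (σ i u).PosSemidef) ∧
      (∀ i, ∑ u, σ i u = ρ) ∧
      ∀ i j u v, i ≠ j → (u = v ∨ (copies (orthGraph k) k).Adj u v) → σ i u * σ j v = 0} := by
    have hkCne : (k:ℂ) ≠ 0 := by exact_mod_cast hpos.ne'
    set msg : Fin (2^k) ≃ PMVertex k := (Fintype.equivFinOfCardEq card_pm).symm with hmsg
    refine ⟨k, Matrix.diagonal (fun _ : Fin k => (1:ℂ)/k),
      fun i pp => if pp.1 = msg i then kmat pp.1 pp.2 else 0, ?_, ?_, ?_, ?_, ?_⟩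
    · refine Matrix.PosSemidef.diagonal ?_
      intro r
      have hcast : ((1/(k:ℝ) : ℝ) : ℂ) = 1/(k:ℂ) := by push_cast; ring
      rw [← hcast]
      exact Complex.zero_le_real.mpr (by positivity)
    · rw [Matrix.trace_diagonal]
      rw [Finset.sum_const, Finset.card_univ, Fintype.card_fin, nsmul_eq_mul]
      field_simp
    · intro i pp
      dsimp only
      by_cases h : pp.1 = msg i
      · rw [if_pos h]; exact kmat_psd _ _
      · rw [if_neg h]; exact Matrix.PosSemidef.zero
    · intro i
      dsimp only
      rw [Fintype.sum_prod_type]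
      rw [Finset.sum_eq_single (msg i)]
      · have : ∀ c : Fin k, (if msg i = msg i then kmat (msg i) c else 0) = kmat (msg i) c := by
          intro c; rw [if_pos rfl]
        rw [Finset.sum_congr rfl (fun c _ => this c)]
        exact kmat_sum hpos (msg i)
      · intro u _ hu
        refine Finset.sum_eq_zero fun c _ => ?_
        rw [if_neg hu]
      · intro h
        exact absurd (Finset.mem_univ _) h
    · intro i j uu vv hij hcond
      dsimp only
      by_cases h1 : uu.1 = msg i
      swap
      · rw [if_neg h1, Matrix.zero_mul]
      by_cases h2 : vv.1 = msg j
      swap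
      · rw [if_neg h2, Matrix.mul_zero]
      rw [if_pos h1, if_pos h2]
      rcases hcond with he | hadj
      · exfalso
        apply hij
        apply msg.injective
        rw [← h1, ← h2, he]
      · obtain ⟨hc2, _, hsum0⟩ := hadj
        rw [hc2]
        exact kmat_orth hpos vv.2 hsum0
  have h2le : (2^k : ℕ) ≤ qIndepNum (copies (orthGraph k) k) := le_csSup hCbdd hCmem
  calc k * qIndepNum (orthGraph k) < 2^k := lt_of_le_of_ne hkm hne
    _ ≤ _ := h2le

end ZeroError
end
end

section
/- For all finite simple graphs G and H and every ℓ ≥ 1, the entanglement-assisted compound independence number with ℓ receivers is super-multiplicative with respect to the strong product: α*_{1,ℓ}(G ⊠ H) ≥ α*_{1,ℓ}(G) · α*_{1,ℓ}(H). -/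
open scoped BigOperators ComplexOrder
open Matrix

noncomputable section

namespace ZeroError

variable {V W : Type*}

section Auxiliary

open Kronecker

variable {d ℓ : ℕ}

/-- Embedding of an off-`k` assignment plus a value at `k` into a full tuple. -/
def emb (k : Fin ℓ) (f : {r : Fin ℓ // r ≠ k} → Fin d) (a : Fin d) : Fin ℓ → Fin d :=
  fun r => if h : r = k then a else f ⟨r, h⟩

lemma emb_self (k : Fin ℓ) (f : {r : Fin ℓ // r ≠ k} → Fin d) (a : Fin d) :
    emb k f a k = a := dif_pos rfl

lemma emb_ne (k : Fin ℓ) (f : {r : Fin ℓ // r ≠ k} → Fin d) (a : Fin d) {r : Fin ℓ}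
    (h : r ≠ k) : emb k f a r = f ⟨r, h⟩ := dif_neg h

lemma funSplit_symm (k : Fin ℓ) (a : Fin d) (f : {r : Fin ℓ // r ≠ k} → Fin d) :
    (Equiv.funSplitAt k (Fin d)).symm (a, f) = emb k f a := by
  funext r
  by_cases h : r = k
  · subst h; simp [Equiv.funSplitAt, Equiv.piSplitAt, emb]
  · simp [Equiv.funSplitAt, Equiv.piSplitAt, emb, h]

lemma update_emb (k : Fin ℓ) (f : {r : Fin ℓ // r ≠ k} → Fin d) (a b : Fin d) :
    Function.update (emb k f a) k b = emb k f b := by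
  funext r
  rcases eq_or_ne r k with h | h
  · subst h; rw [Function.update_self, emb_self]
  · rw [Function.update_of_ne h, emb_ne k f a h, emb_ne k f b h]

/-- The partial trace is a sum of compressions. -/
lemma ptraceK_eq_sum (k : Fin ℓ) (M : Matrix (Fin ℓ → Fin d) (Fin ℓ → Fin d) ℂ) :
    ptraceK k M = ∑ f : {r : Fin ℓ // r ≠ k} → Fin d, M.submatrix (emb k f) (emb k f) := by
  ext a b
  simp only [ptraceK, Matrix.of_apply, Matrix.sum_apply, Matrix.submatrix_apply]
  have hinner : ∀ s : Fin ℓ → Fin d,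
      (∑ t : Fin ℓ → Fin d,
        if s k = a ∧ t k = b ∧ ∀ r, r ≠ k → s r = t r then M s t else 0)
      = if s k = a then M s (Function.update s k b) else 0 := by
    intro s
    have hcond : ∀ t : Fin ℓ → Fin d,
        (s k = a ∧ t k = b ∧ ∀ r, r ≠ k → s r = t r)
          ↔ (t = Function.update s k b ∧ s k = a) := by
      intro t
      constructor
      · rintro ⟨h1, h2, h3⟩
        refine ⟨funext fun r => ?_, h1⟩
        rcases eq_or_ne r k with hr | hr
        · subst hr; rw [Function.update_self]; exact h2
        · rw [Function.update_of_ne hr]; exact (h3 r hr).symm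
      · rintro ⟨rfl, h1⟩
        exact ⟨h1, Function.update_self _ _ _,
          fun r hr => (Function.update_of_ne hr _ _).symm⟩
    calc (∑ t : Fin ℓ → Fin d,
        if s k = a ∧ t k = b ∧ ∀ r, r ≠ k → s r = t r then M s t else 0)
        = ∑ t : Fin ℓ → Fin d,
            if t = Function.update s k b then (if s k = a then M s t else 0) else 0 := by
          refine Finset.sum_congr rfl fun t _ => ?_
          rw [if_congr (hcond t) rfl rfl, ite_and]
      _ = if s k = a then M s (Function.update s k b) else 0 := by
          rw [Finset.sum_ite_eq' Finset.univ (Function.update s k b)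
            (fun t => if s k = a then M s t else 0)]
          simp
  rw [Finset.sum_congr rfl fun s _ => hinner s]
  rw [← Equiv.sum_comp (Equiv.funSplitAt k (Fin d)).symm
    (fun s => if s k = a then M s (Function.update s k b) else 0), Fintype.sum_prod_type]
  simp only [funSplit_symm, emb_self, update_emb]
  rw [Finset.sum_comm]
  refine Finset.sum_congr rfl fun f _ => ?_
  rw [Finset.sum_ite_eq' Finset.univ a (fun a' => M (emb k f a') (emb k f b))]
  simp

lemma ptraceK_posSemidef (k : Fin ℓ) {M : Matrix (Fin ℓ → Fin d) (Fin ℓ → Fin d) ℂ}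
    (hM : M.PosSemidef) : (ptraceK k M).PosSemidef := by
  rw [ptraceK_eq_sum]
  exact Finset.sum_induction _ _ (fun A B hA hB => hA.add hB) Matrix.PosSemidef.zero
    (fun f _ => hM.submatrix _)

lemma trace_submatrix_equiv {m n : Type*} [Fintype m] [Fintype n] (e : m ≃ n)
    (M : Matrix n n ℂ) : (M.submatrix e e).trace = M.trace := by
  simp only [Matrix.trace, Matrix.diag, Matrix.submatrix_apply]
  exact Equiv.sum_comp e (fun j => M j j)

lemma ptraceK_trace (k : Fin ℓ) (M : Matrix (Fin ℓ → Fin d) (Fin ℓ → Fin d) ℂ) :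
    (ptraceK k M).trace = M.trace := by
  rw [ptraceK_eq_sum, Matrix.trace_sum]
  have h : M.trace = ∑ p : Fin d × ({r : Fin ℓ // r ≠ k} → Fin d),
      M (emb k p.2 p.1) (emb k p.2 p.1) := by
    simp only [Matrix.trace, Matrix.diag]
    rw [← Equiv.sum_comp (Equiv.funSplitAt k (Fin d)).symm (fun s => M s s)]
    refine Finset.sum_congr rfl fun p _ => ?_
    obtain ⟨x, f⟩ := p
    rw [funSplit_symm]
  rw [h, Fintype.sum_prod_type, Finset.sum_comm]
  refine Finset.sum_congr rfl fun f _ => ?_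
  simp [Matrix.trace, Matrix.diag]

lemma ptraceK_sum {ι : Type*} (k : Fin ℓ) (s : Finset ι)
    (A : ι → Matrix (Fin ℓ → Fin d) (Fin ℓ → Fin d) ℂ) :
    ptraceK k (∑ i ∈ s, A i) = ∑ i ∈ s, ptraceK k (A i) := by
  ext a b
  simp only [ptraceK_eq_sum, Matrix.sum_apply, Matrix.submatrix_apply]
  rw [Finset.sum_comm]

lemma sum_submatrix {ι n p : Type*} (s : Finset ι) (A : ι → Matrix n n ℂ) (e : p → n) :
    (∑ i ∈ s, A i).submatrix e e = ∑ i ∈ s, (A i).submatrix e e := by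
  ext a b
  simp [Matrix.sum_apply]

lemma conjTranspose_kron {n₁ n₂ m₁ m₂ : Type*}
    (P : Matrix n₁ m₁ ℂ) (Q : Matrix n₂ m₂ ℂ) : (P ⊗ₖ Q)ᴴ = Pᴴ ⊗ₖ Qᴴ := by
  ext ⟨i, j⟩ ⟨i', j'⟩
  simp only [Matrix.conjTranspose_apply, Matrix.kroneckerMap_apply, star_mul']

open scoped MatrixOrder in
lemma psd_eq_conjTranspose_mul_self {n : Type*} [Fintype n] [DecidableEq n]
    {A : Matrix n n ℂ} (hA : A.PosSemidef) : ∃ B : Matrix n n ℂ, A = Bᴴ * B := by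
  obtain ⟨B, rfl⟩ := CStarAlgebra.nonneg_iff_eq_star_mul_self.mp hA.nonneg
  exact ⟨B, rfl⟩

lemma posSemidef_kron {n₁ n₂ : Type*} [Fintype n₁] [Fintype n₂] [DecidableEq n₁] [DecidableEq n₂]
    {A : Matrix n₁ n₁ ℂ} {B : Matrix n₂ n₂ ℂ} (hA : A.PosSemidef) (hB : B.PosSemidef) :
    (A ⊗ₖ B).PosSemidef := by
  obtain ⟨P, rfl⟩ := psd_eq_conjTranspose_mul_self hA
  obtain ⟨Q, rfl⟩ := psd_eq_conjTranspose_mul_self hB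
  rw [Matrix.mul_kronecker_mul, ← conjTranspose_kron]
  exact Matrix.posSemidef_conjTranspose_mul_self _

lemma kron_sum_sum {ι κ n₁ n₂ : Type*} [Fintype n₁] [Fintype n₂]
    (s : Finset ι) (t : Finset κ) (A : ι → Matrix n₁ n₁ ℂ) (B : κ → Matrix n₂ n₂ ℂ) :
    ∑ i ∈ s, ∑ j ∈ t, (A i ⊗ₖ B j) = (∑ i ∈ s, A i) ⊗ₖ (∑ j ∈ t, B j) := by
  ext ⟨p, q⟩ ⟨p', q'⟩
  simp only [Matrix.sum_apply, Matrix.kroneckerMap_apply]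
  rw [Finset.sum_mul_sum]

/-- Pointwise-induced equivalence of tuple spaces. -/
def mixE {D d₁ d₂ : ℕ} (α : Type) (e₀ : Fin D ≃ Fin d₁ × Fin d₂) :
    (α → Fin D) ≃ (α → Fin d₁) × (α → Fin d₂) :=
  (Equiv.arrowCongr (Equiv.refl _) e₀).trans (Equiv.arrowProdEquivProdArrow _ _ _)

lemma mixE_apply {D d₁ d₂ : ℕ} {α : Type} (e₀ : Fin D ≃ Fin d₁ × Fin d₂) (x : α → Fin D) :
    mixE α e₀ x = (fun r => (e₀ (x r)).1, fun r => (e₀ (x r)).2) := rfl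

lemma ptraceK_kron {D d₁ d₂ : ℕ} (k : Fin ℓ) (e₀ : Fin D ≃ Fin d₁ × Fin d₂)
    (A : Matrix (Fin ℓ → Fin d₁) (Fin ℓ → Fin d₁) ℂ)
    (B : Matrix (Fin ℓ → Fin d₂) (Fin ℓ → Fin d₂) ℂ) :
    ptraceK k ((A ⊗ₖ B).submatrix (mixE (Fin ℓ) e₀) (mixE (Fin ℓ) e₀))
      = ((ptraceK k A) ⊗ₖ (ptraceK k B)).submatrix e₀ e₀ := by
  rw [ptraceK_eq_sum, ptraceK_eq_sum, ptraceK_eq_sum, ← kron_sum_sum]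
  simp only [sum_submatrix]
  have main : (∑ F : {r : Fin ℓ // r ≠ k} → Fin D,
      ((A ⊗ₖ B).submatrix (mixE (Fin ℓ) e₀) (mixE (Fin ℓ) e₀)).submatrix (emb k F) (emb k F))
      = ∑ p : ({r : Fin ℓ // r ≠ k} → Fin d₁) × ({r : Fin ℓ // r ≠ k} → Fin d₂),
        ((A.submatrix (emb k p.1) (emb k p.1)) ⊗ₖ
          (B.submatrix (emb k p.2) (emb k p.2))).submatrix e₀ e₀ := by
    refine Fintype.sum_equiv (mixE {r : Fin ℓ // r ≠ k} e₀) _ _ fun F => ?_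
    have hmix : ∀ a : Fin D, (mixE (Fin ℓ) e₀) (emb k F a)
        = (emb k (fun r => (e₀ (F r)).1) (e₀ a).1,
           emb k (fun r => (e₀ (F r)).2) (e₀ a).2) := by
      intro a
      rw [mixE_apply]
      have h1 : (fun r => (e₀ (emb k F a r)).1) = emb k (fun r => (e₀ (F r)).1) (e₀ a).1 := by
        funext r
        rcases eq_or_ne r k with h | h
        · subst h; rw [emb_self, emb_self]
        · rw [emb_ne k F a h, emb_ne _ _ _ h]
      have h2 : (fun r => (e₀ (emb k F a r)).2) = emb k (fun r => (e₀ (F r)).2) (e₀ a).2 := by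
        funext r
        rcases eq_or_ne r k with h | h
        · subst h; rw [emb_self, emb_self]
        · rw [emb_ne k F a h, emb_ne _ _ _ h]
      rw [h1, h2]
    ext a b
    simp only [Matrix.submatrix_apply, hmix, Matrix.kroneckerMap_apply, mixE_apply]
  rw [main, Fintype.sum_prod_type]

end Auxiliary

section PartB

/-- Reinterpret a Euclidean vector as a plain function. -/
def vecOf {d : ℕ} (x : EuclideanSpace ℂ (Fin d)) : Fin d → ℂ := x

/-- Reinterpret a plain function as a Euclidean vector. -/
def euclOf {d : ℕ} (x : Fin d → ℂ) : EuclideanSpace ℂ (Fin d) := WithLp.toLp 2 x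

/-- Core trace bound: pairwise orthogonal PSD matrices dominated by `R` have total trace
at most the trace of `R`. -/
lemma core_trace_bound {d m : ℕ} {R : Matrix (Fin d) (Fin d) ℂ}
    {τ : Fin m → Matrix (Fin d) (Fin d) ℂ}
    (hR : R.PosSemidef) (hτ : ∀ i, (τ i).PosSemidef)
    (hsub : ∀ i, (R - τ i).PosSemidef)
    (horth : ∀ i j, i ≠ j → τ i * τ j = 0) :
    ∑ i, ((τ i).trace).re ≤ (R.trace).re := by
  classical
  -- trace of τ i is the sum of its eigenvalues
  have htr : ∀ i, ((τ i).trace).re = ∑ r, (hτ i).1.eigenvalues r := by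
    intro i
    have h1 : (τ i).trace = ∑ r, (((hτ i).1.eigenvalues r : ℝ) : ℂ) :=
      (hτ i).1.trace_eq_sum_eigenvalues
    rw [h1, Complex.re_sum]
    simp
  -- the eigenvector equation, with a complex scalar
  have heig : ∀ (i : Fin m) (r : Fin d),
      τ i *ᵥ vecOf ((hτ i).1.eigenvectorBasis r)
        = (((hτ i).1.eigenvalues r : ℝ) : ℂ) • vecOf ((hτ i).1.eigenvectorBasis r) := by
    intro i r
    have he' : τ i *ᵥ vecOf ((hτ i).1.eigenvectorBasis r)
        = (hτ i).1.eigenvalues r • vecOf ((hτ i).1.eigenvectorBasis r) :=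
      (hτ i).1.mulVec_eigenvectorBasis r
    rw [he']
    funext j
    simp [vecOf, Complex.real_smul]
  -- unit norm of eigenvectors as a dot product
  have hnorm : ∀ (i : Fin m) (r : Fin d),
      star (vecOf ((hτ i).1.eigenvectorBasis r)) ⬝ᵥ vecOf ((hτ i).1.eigenvectorBasis r)
        = 1 := by
    intro i r
    have h2 : (inner ℂ ((hτ i).1.eigenvectorBasis r) ((hτ i).1.eigenvectorBasis r) : ℂ) = 1 := by
      rw [@inner_self_eq_norm_sq_to_K ℂ, (hτ i).1.eigenvectorBasis.orthonormal.1 r]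
      norm_num
    rw [dotProduct_comm]
    exact h2
  -- the eigenvalue as a quadratic form
  have hquad : ∀ (i : Fin m) (r : Fin d),
      ((((hτ i).1.eigenvalues r : ℝ)) : ℂ)
        = star (vecOf ((hτ i).1.eigenvectorBasis r)) ⬝ᵥ
            (τ i *ᵥ vecOf ((hτ i).1.eigenvectorBasis r)) := by
    intro i r
    rw [heig i r, dotProduct_smul, hnorm i r]
    simp
  -- eigenvalues are dominated by the quadratic form of R
  have hbound : ∀ (i : Fin m) (r : Fin d),
      (hτ i).1.eigenvalues r
        ≤ (star (vecOf ((hτ i).1.eigenvectorBasis r)) ⬝ᵥ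
            (R *ᵥ vecOf ((hτ i).1.eigenvectorBasis r))).re := by
    intro i r
    have h0 := (hsub i).re_dotProduct_nonneg (vecOf ((hτ i).1.eigenvectorBasis r))
    rw [Matrix.sub_mulVec, dotProduct_sub, map_sub] at h0
    have h1 : (star (vecOf ((hτ i).1.eigenvectorBasis r)) ⬝ᵥ
        (τ i *ᵥ vecOf ((hτ i).1.eigenvectorBasis r))).re = (hτ i).1.eigenvalues r := by
      rw [← hquad i r]; simp
    simp only [RCLike.re_to_complex] at h0
    linarith
  -- cross-orthogonality of eigenvectors belonging to distinct indices
  have hcross : ∀ (i j : Fin m) (r r' : Fin d), i ≠ j →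
      (hτ i).1.eigenvalues r ≠ 0 → (hτ j).1.eigenvalues r' ≠ 0 →
      (inner ℂ ((hτ i).1.eigenvectorBasis r) ((hτ j).1.eigenvectorBasis r') : ℂ) = 0 := by
    intro i j r r' hij h1 h2
    have hzero : star (vecOf ((hτ i).1.eigenvectorBasis r)) ⬝ᵥ
        ((τ i * τ j) *ᵥ vecOf ((hτ j).1.eigenvectorBasis r')) = 0 := by
      rw [horth i j hij]; simp
    have hvec : star (vecOf ((hτ i).1.eigenvectorBasis r)) ᵥ* τ i
        = ((((hτ i).1.eigenvalues r : ℝ)) : ℂ) • star (vecOf ((hτ i).1.eigenvectorBasis r)) := by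
      have e1 : (τ i)ᴴ *ᵥ vecOf ((hτ i).1.eigenvectorBasis r)
          = ((((hτ i).1.eigenvalues r : ℝ)) : ℂ) • vecOf ((hτ i).1.eigenvectorBasis r) := by
        rw [(hτ i).1.eq]; exact heig i r
      calc star (vecOf ((hτ i).1.eigenvectorBasis r)) ᵥ* τ i
          = star (vecOf ((hτ i).1.eigenvectorBasis r)) ᵥ* ((τ i)ᴴ)ᴴ := by
            rw [Matrix.conjTranspose_conjTranspose]
        _ = star ((τ i)ᴴ *ᵥ vecOf ((hτ i).1.eigenvectorBasis r)) :=
            (Matrix.star_mulVec _ _).symm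
        _ = ((((hτ i).1.eigenvalues r : ℝ)) : ℂ) • star (vecOf ((hτ i).1.eigenvectorBasis r)) := by
            rw [e1, star_smul]
            simp [Complex.star_def, Complex.conj_ofReal]
    have hkey : star (vecOf ((hτ i).1.eigenvectorBasis r)) ⬝ᵥ
        ((τ i * τ j) *ᵥ vecOf ((hτ j).1.eigenvectorBasis r'))
        = ((((hτ i).1.eigenvalues r : ℝ)) : ℂ) * (((((hτ j).1.eigenvalues r' : ℝ)) : ℂ) *
            (star (vecOf ((hτ i).1.eigenvectorBasis r)) ⬝ᵥ
              vecOf ((hτ j).1.eigenvectorBasis r'))) := by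
      rw [← Matrix.mulVec_mulVec, heig j r', Matrix.mulVec_smul, dotProduct_smul,
        Matrix.dotProduct_mulVec, hvec, smul_dotProduct]
      simp only [smul_eq_mul]
      ring
    rw [hzero] at hkey
    have hd : star (vecOf ((hτ i).1.eigenvectorBasis r)) ⬝ᵥ
        vecOf ((hτ j).1.eigenvectorBasis r') = 0 := by
      rcases mul_eq_zero.mp hkey.symm with h | h
      · exact absurd (Complex.ofReal_eq_zero.mp h) h1
      rcases mul_eq_zero.mp h with h' | h'
      · exact absurd (Complex.ofReal_eq_zero.mp h') h2
      · exact h'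
    rw [EuclideanSpace.inner_eq_star_dotProduct, dotProduct_comm]
    exact hd
  -- the orthonormal family of eigenvectors with nonzero eigenvalues
  let v : {p : Fin m × Fin d // (hτ p.1).1.eigenvalues p.2 ≠ 0} → EuclideanSpace ℂ (Fin d) :=
    fun p => (hτ p.1.1).1.eigenvectorBasis p.1.2
  have hON : Orthonormal ℂ v := by
    constructor
    · intro p; exact (hτ p.1.1).1.eigenvectorBasis.orthonormal.1 p.1.2
    · rintro ⟨⟨i, r⟩, hp⟩ ⟨⟨j, r'⟩, hq⟩ hne
      by_cases hij : i = j
      · subst hij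
        have hrr : r ≠ r' := by
          intro hr; exact hne (by simp [hr])
        exact (hτ i).1.eigenvectorBasis.orthonormal.2 hrr
      · exact hcross i j r r' hij hp hq
  -- decompose R
  obtain ⟨B, hB⟩ := psd_eq_conjTranspose_mul_self hR
  let y : Fin d → EuclideanSpace ℂ (Fin d) := fun c => euclOf (star (B c))
  have hyinner : ∀ (c : Fin d) (x : EuclideanSpace ℂ (Fin d)),
      (inner ℂ (y c) x : ℂ) = (B *ᵥ vecOf x) c := by
    intro c x
    simp only [PiLp.inner_apply, y, euclOf]
    simp [vecOf, Matrix.mulVec, dotProduct, Pi.star_apply, Complex.star_def,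
      Complex.conj_conj, RCLike.inner_apply]
    exact Finset.sum_congr rfl fun _ _ => mul_comm _ _
  have hre : ∀ z : Fin d → ℂ, (star z ⬝ᵥ z).re = ∑ c, ‖z c‖ ^ 2 := by
    intro z
    rw [dotProduct, Complex.re_sum]
    refine Finset.sum_congr rfl fun c _ => ?_
    simp only [Pi.star_apply, Complex.star_def]
    rw [← Complex.normSq_eq_conj_mul_self, Complex.ofReal_re, Complex.normSq_eq_norm_sq]
  have hquadR : ∀ x : EuclideanSpace ℂ (Fin d),
      (star (vecOf x) ⬝ᵥ (R *ᵥ vecOf x)).re = ∑ c, ‖(inner ℂ (y c) x : ℂ)‖ ^ 2 := by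
    intro x
    rw [hB, ← Matrix.mulVec_mulVec, Matrix.dotProduct_mulVec, ← Matrix.star_mulVec, hre]
    refine Finset.sum_congr rfl fun c _ => ?_
    rw [hyinner c x]
  have hynorm : ∀ c, ‖y c‖ ^ 2 = ∑ j, ‖B c j‖ ^ 2 := by
    intro c
    rw [EuclideanSpace.norm_eq, Real.sq_sqrt (by positivity)]
    refine Finset.sum_congr rfl fun j _ => ?_
    simp [y, euclOf, Pi.star_apply, norm_star]
  have htrR : (R.trace).re = ∑ c, ∑ j, ‖B c j‖ ^ 2 := by
    have h3 : R.trace = ∑ j, star (fun c => B c j) ⬝ᵥ (fun c => B c j) := by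
      rw [hB]
      show ∑ j, (Bᴴ * B) j j = _
      refine Finset.sum_congr rfl fun j _ => ?_
      simp [Matrix.mul_apply, dotProduct, Matrix.conjTranspose_apply]
    rw [h3, Complex.re_sum]
    rw [Finset.sum_congr rfl fun j (_ : j ∈ Finset.univ) => hre (fun c => B c j)]
    rw [Finset.sum_comm]
  -- put everything together
  have step1 : ∑ i, ((τ i).trace).re = ∑ p : Fin m × Fin d, (hτ p.1).1.eigenvalues p.2 := by
    rw [Fintype.sum_prod_type]
    exact Finset.sum_congr rfl fun i _ => htr i
  have step2 : ∑ p : Fin m × Fin d, (hτ p.1).1.eigenvalues p.2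
      = ∑ p : {p : Fin m × Fin d // (hτ p.1).1.eigenvalues p.2 ≠ 0},
          (hτ p.1.1).1.eigenvalues p.1.2 := by
    rw [← Finset.sum_filter_ne_zero (s := Finset.univ)]
    exact Finset.sum_subtype _ (by simp) _
  have step3 : (∑ p : {p : Fin m × Fin d // (hτ p.1).1.eigenvalues p.2 ≠ 0},
        (hτ p.1.1).1.eigenvalues p.1.2)
      ≤ ∑ p : {p : Fin m × Fin d // (hτ p.1).1.eigenvalues p.2 ≠ 0},
          ∑ c, ‖(inner ℂ (y c) (v p) : ℂ)‖ ^ 2 := by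
    refine Finset.sum_le_sum fun p _ => ?_
    rw [← hquadR (v p)]
    exact hbound p.1.1 p.1.2
  have step4 : (∑ p : {p : Fin m × Fin d // (hτ p.1).1.eigenvalues p.2 ≠ 0},
        ∑ c, ‖(inner ℂ (y c) (v p) : ℂ)‖ ^ 2) ≤ (R.trace).re := by
    rw [Finset.sum_comm, htrR]
    refine Finset.sum_le_sum fun c _ => ?_
    rw [← hynorm c]
    calc (∑ p : {p : Fin m × Fin d // (hτ p.1).1.eigenvalues p.2 ≠ 0},
          ‖(inner ℂ (y c) (v p) : ℂ)‖ ^ 2)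
        = ∑ p : {p : Fin m × Fin d // (hτ p.1).1.eigenvalues p.2 ≠ 0},
            ‖(inner ℂ (v p) (y c) : ℂ)‖ ^ 2 :=
          Finset.sum_congr rfl fun p _ => by rw [norm_inner_symm]
      _ ≤ ‖y c‖ ^ 2 := hON.sum_inner_products_le (y c)
  rw [step1, step2]
  exact le_trans step3 step4

end PartB

section Glue

open Kronecker

/-- The feasible set defining `qCompoundNum`. -/
def qSet {U : Type*} [Fintype U] (A : SimpleGraph U) (ℓ : ℕ) : Set ℕ :=
  {m | ∃ (d : ℕ) (ρ : Matrix (Fin ℓ → Fin d) (Fin ℓ → Fin d) ℂ)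
      (σ : Fin m → U → Matrix (Fin ℓ → Fin d) (Fin ℓ → Fin d) ℂ),
    ρ.PosSemidef ∧ ρ.trace = 1 ∧ (∀ i u, (σ i u).PosSemidef) ∧
    (∀ i, ∑ u, σ i u = ρ) ∧
    ∀ (k : Fin ℓ) i j u v, i ≠ j → (u = v ∨ A.Adj u v) →
      ptraceK k (σ i u) * ptraceK k (σ j v) = 0}

lemma qCompoundNum_eq_sSup {U : Type*} [Fintype U] (A : SimpleGraph U) (ℓ : ℕ) :
    qCompoundNum A ℓ = sSup (qSet A ℓ) := rfl

lemma zero_mem_qSet {U : Type*} [Fintype U] (A : SimpleGraph U) (ℓ : ℕ) :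
    0 ∈ qSet A ℓ := by
  refine ⟨1, 1, fun i => i.elim0, Matrix.PosSemidef.one, ?_, fun i => i.elim0,
    fun i => i.elim0, fun k i => i.elim0⟩
  rw [Matrix.trace_one]
  simp

lemma qSet_le_card {U : Type} [Fintype U] (A : SimpleGraph U) {ℓ m : ℕ} (hℓ : 1 ≤ ℓ)
    (hm : m ∈ qSet A ℓ) : m ≤ Fintype.card U := by
  classical
  obtain ⟨d, ρ, σ, hρ, htr, hσ, hsum, horth⟩ := hm
  set k : Fin ℓ := ⟨0, hℓ⟩ with hk
  set R : Matrix (Fin d) (Fin d) ℂ := ptraceK k ρ with hR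
  have hRsum : ∀ i, ∑ u, ptraceK k (σ i u) = R := by
    intro i
    rw [hR, ← hsum i, ptraceK_sum]
  have hRpsd : R.PosSemidef := ptraceK_posSemidef k hρ
  have hRtr : (R.trace).re = 1 := by
    rw [hR, ptraceK_trace, htr]
    simp
  -- for each u the family i ↦ ptraceK k (σ i u) is pairwise orthogonal PSD below R
  have key : ∀ u : U, ∑ i, ((ptraceK k (σ i u)).trace).re ≤ (R.trace).re := by
    intro u
    refine core_trace_bound hRpsd (fun i => ptraceK_posSemidef k (hσ i u)) ?_
      (fun i j hij => horth k i j u u hij (Or.inl rfl))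
    intro i
    have hdecomp : R - ptraceK k (σ i u) = ∑ v ∈ Finset.univ.erase u, ptraceK k (σ i v) := by
      rw [Finset.sum_erase_eq_sub (Finset.mem_univ u), hRsum i]
    rw [hdecomp]
    refine Finset.sum_induction _ _ (fun A B hA hB => hA.add hB) Matrix.PosSemidef.zero
      (fun v _ => ptraceK_posSemidef k (hσ i v))
  have total : (m : ℝ) ≤ (Fintype.card U : ℝ) := by
    have h1 : ∑ u : U, ∑ i : Fin m, ((ptraceK k (σ i u)).trace).re
        ≤ (Fintype.card U : ℝ) := by
      calc ∑ u : U, ∑ i : Fin m, ((ptraceK k (σ i u)).trace).re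
          ≤ ∑ _u : U, (1 : ℝ) := by
            refine Finset.sum_le_sum fun u _ => ?_
            simpa [hRtr] using key u
        _ = (Fintype.card U : ℝ) := by simp
    have h2 : ∑ u : U, ∑ i : Fin m, ((ptraceK k (σ i u)).trace).re = (m : ℝ) := by
      rw [Finset.sum_comm]
      have : ∀ i : Fin m, ∑ u : U, ((ptraceK k (σ i u)).trace).re = 1 := by
        intro i
        rw [← Complex.re_sum, ← Matrix.trace_sum, hRsum i, hRtr]
      rw [Finset.sum_congr rfl fun i _ => this i]
      simp
    linarith
  exact_mod_cast total

lemma qSet_bddAbove {U : Type} [Fintype U] (A : SimpleGraph U) {ℓ : ℕ} (hℓ : 1 ≤ ℓ) :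
    BddAbove (qSet A ℓ) :=
  ⟨Fintype.card U, fun _ hm => qSet_le_card A hℓ hm⟩

lemma mul_mem_qSet_strongProd {V W : Type} [Fintype V] [Fintype W]
    (G : SimpleGraph V) (H : SimpleGraph W) {ℓ a c : ℕ}
    (ha : a ∈ qSet G ℓ) (hc : c ∈ qSet H ℓ) : a * c ∈ qSet (strongProd G H) ℓ := by
  classical
  obtain ⟨d₁, ρ₁, σ₁, hρ₁, htr₁, hσ₁, hsum₁, horth₁⟩ := ha
  obtain ⟨d₂, ρ₂, σ₂, hρ₂, htr₂, hσ₂, hsum₂, horth₂⟩ := hc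
  set e₀ : Fin (d₁ * d₂) ≃ Fin d₁ × Fin d₂ := finProdFinEquiv.symm with he₀
  set E := mixE (Fin ℓ) e₀ with hE
  set fi : Fin (a * c) ≃ Fin a × Fin c := finProdFinEquiv.symm with hfi
  refine ⟨d₁ * d₂, (ρ₁ ⊗ₖ ρ₂).submatrix E E,
    fun i p => ((σ₁ (fi i).1 p.1) ⊗ₖ (σ₂ (fi i).2 p.2)).submatrix E E, ?_, ?_, ?_, ?_, ?_⟩
  · exact (posSemidef_kron hρ₁ hρ₂).submatrix _
  · rw [trace_submatrix_equiv, Matrix.trace_kronecker, htr₁, htr₂, one_mul]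
  · exact fun i p => (posSemidef_kron (hσ₁ _ _) (hσ₂ _ _)).submatrix _
  · intro i
    rw [← hsum₁ (fi i).1, ← hsum₂ (fi i).2, ← kron_sum_sum]
    simp only [sum_submatrix]
    rw [Fintype.sum_prod_type]
  · intro k i j p q hij hpq
    rw [hE, ptraceK_kron, ptraceK_kron, Matrix.submatrix_mul_equiv,
      ← Matrix.mul_kronecker_mul]
    have hadj : ((p.1 = q.1 ∨ G.Adj p.1 q.1) ∧ (p.2 = q.2 ∨ H.Adj p.2 q.2)) := by
      rcases hpq with h | h
      · exact ⟨Or.inl (congrArg Prod.fst h), Or.inl (congrArg Prod.snd h)⟩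
      · exact ⟨h.2.1, h.2.2⟩
    have hij' : (fi i).1 ≠ (fi j).1 ∨ (fi i).2 ≠ (fi j).2 := by
      by_contra hcon
      push_neg at hcon
      exact hij (fi.injective (Prod.ext hcon.1 hcon.2))
    rcases hij' with h | h
    · rw [horth₁ k _ _ _ _ h hadj.1, Matrix.zero_kronecker, Matrix.submatrix_zero]
      rfl
    · rw [horth₂ k _ _ _ _ h hadj.2, Matrix.kronecker_zero, Matrix.submatrix_zero]
      rfl

end Glue

/-- super-multiplicativity of the entanglement-assisted compound
independence number: `α*_{1,ℓ}(G ⊠ H) ≥ α*_{1,ℓ}(G) · α*_{1,ℓ}(H)`. -/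
theorem qCompound_supermultiplicative {V W : Type} [Fintype V] [Fintype W]
    (G : SimpleGraph V) (H : SimpleGraph W) (ℓ : ℕ) (hℓ : 1 ≤ ℓ) :
    qCompoundNum G ℓ * qCompoundNum H ℓ ≤ qCompoundNum (strongProd G H) ℓ := by
  have h1 : qCompoundNum G ℓ ∈ qSet G ℓ := by
    rw [qCompoundNum_eq_sSup]
    exact Nat.sSup_mem ⟨0, zero_mem_qSet G ℓ⟩ (qSet_bddAbove G hℓ)
  have h2 : qCompoundNum H ℓ ∈ qSet H ℓ := by
    rw [qCompoundNum_eq_sSup]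
    exact Nat.sSup_mem ⟨0, zero_mem_qSet H ℓ⟩ (qSet_bddAbove H hℓ)
  rw [qCompoundNum_eq_sSup (strongProd G H)]
  exact le_csSup (qSet_bddAbove (strongProd G H) hℓ) (mul_mem_qSet_strongProd G H h1 h2)

end ZeroError
end
end
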